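/- arXiv:0706.1337 — 8 statements merged into one kernel-verified Lean document; each statement's English description precedes it below -/
import Mathlib

section
/- The bracket on d = g ⊕ g* defined by [x+ξ, y+η] = [x,y] + ad*_ξ y − ad*_η x + [ξ,η] + ad*_x η − ad*_y ξ (where (ad*_x ξ, y) = (ξ,[y,x]) and (ad*_ξ x, η) = (x,[η,ξ])) is a Lie bracket, i.e. it is skew-symmetric and satisfies the Jacobi identity. -/
namespace DoubleAux

variable {g gs : Type} [LieRing g] [LieAlgebra ℝ g] [LieRing gs] [LieAlgebra ℝ gs]

/-- The Drinfeld double bracket on `g × gs`. -/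
def BD (coadg : g →ₗ[ℝ] gs →ₗ[ℝ] gs) (coadgs : gs →ₗ[ℝ] g →ₗ[ℝ] g)
    (u v : g × gs) : g × gs :=
  (⁅u.1, v.1⁆ + coadgs u.2 v.1 - coadgs v.2 u.1,
   ⁅u.2, v.2⁆ + coadg u.1 v.2 - coadg v.1 u.2)

/-- The Jacobiator (Leibniz form). -/
def Jc (B : g × gs → g × gs → g × gs) (u v w : g × gs) : g × gs :=
  B u (B v w) - B (B u v) w - B v (B u w)

variable (coadg : g →ₗ[ℝ] gs →ₗ[ℝ] gs) (coadgs : gs →ₗ[ℝ] g →ₗ[ℝ] g)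

lemma BD_skew (u v : g × gs) : BD coadg coadgs u v = - BD coadg coadgs v u := by
  simp only [BD, Prod.neg_mk, Prod.mk.injEq]
  constructor
  · rw [← lie_skew v.1 u.1]; abel
  · rw [← lie_skew v.2 u.2]; abel

lemma BD_add_left (u u' v : g × gs) :
    BD coadg coadgs (u + u') v = BD coadg coadgs u v + BD coadg coadgs u' v := by
  simp only [BD, Prod.fst_add, Prod.snd_add, Prod.mk_add_mk, Prod.mk.injEq,
    add_lie, map_add, LinearMap.add_apply]
  constructor <;> abel

lemma BD_add_right (u v v' : g × gs) :
    BD coadg coadgs u (v + v') = BD coadg coadgs u v + BD coadg coadgs u v' := by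
  simp only [BD, Prod.fst_add, Prod.snd_add, Prod.mk_add_mk, Prod.mk.injEq,
    lie_add, map_add, LinearMap.add_apply]
  constructor <;> abel

lemma BD_neg_right (u v : g × gs) :
    BD coadg coadgs u (-v) = - BD coadg coadgs u v := by
  simp only [BD, Prod.fst_neg, Prod.snd_neg, Prod.neg_mk, Prod.mk.injEq,
    lie_neg, map_neg, LinearMap.neg_apply]
  constructor <;> abel

lemma Jc_cyclic (u v w : g × gs) :
    Jc (BD coadg coadgs) u v w = Jc (BD coadg coadgs) v w u := by
  simp only [Jc]
  rw [BD_skew coadg coadgs w u, BD_neg_right, BD_skew coadg coadgs v u,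
    BD_neg_right, BD_skew coadg coadgs (BD coadg coadgs v w) u,
    BD_skew coadg coadgs w (BD coadg coadgs u v)]
  abel

lemma Jc_add₁ (u u' v w : g × gs) :
    Jc (BD coadg coadgs) (u + u') v w =
      Jc (BD coadg coadgs) u v w + Jc (BD coadg coadgs) u' v w := by
  simp only [Jc, BD_add_left, BD_add_right]
  abel

lemma Jc_add₂ (u v v' w : g × gs) :
    Jc (BD coadg coadgs) u (v + v') w =
      Jc (BD coadg coadgs) u v w + Jc (BD coadg coadgs) u v' w := by
  simp only [Jc, BD_add_left, BD_add_right]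
  abel

lemma Jc_add₃ (u v w w' : g × gs) :
    Jc (BD coadg coadgs) u v (w + w') =
      Jc (BD coadg coadgs) u v w + Jc (BD coadg coadgs) u v w' := by
  simp only [Jc, BD_add_left, BD_add_right]
  abel



section Pairing

variable (p : g →ₗ[ℝ] gs →ₗ[ℝ] ℝ)

/-- coadjoint rep property of `coadg`. -/
lemma coadg_rep
    (hp2 : ∀ ξ : gs, (∀ x : g, p x ξ = 0) → ξ = 0)
    (hcoadg : ∀ (x y : g) (ξ : gs), p y (coadg x ξ) = p ⁅y, x⁆ ξ)
    (x y : g) (ξ : gs) :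
    coadg ⁅x, y⁆ ξ = coadg x (coadg y ξ) - coadg y (coadg x ξ) := by
  have h : ∀ z : g,
      p z (coadg ⁅x, y⁆ ξ - (coadg x (coadg y ξ) - coadg y (coadg x ξ))) = 0 := by
    intro z
    have hzz : (⁅z, ⁅x, y⁆⁆ : g) = ⁅⁅z, x⁆, y⁆ - ⁅⁅z, y⁆, x⁆ := by
      rw [leibniz_lie, ← lie_skew x ⁅z, y⁆]; abel
    simp only [map_sub, hcoadg, hzz, LinearMap.sub_apply]
    abel
  exact sub_eq_zero.mp (hp2 _ h)

/-- coadjoint rep property of `coadgs`. -/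
lemma coadgs_rep
    (hp1 : ∀ x : g, (∀ ξ : gs, p x ξ = 0) → x = 0)
    (hcoadgs : ∀ (ξ η : gs) (x : g), p (coadgs ξ x) η = p x ⁅η, ξ⁆)
    (ξ η : gs) (x : g) :
    coadgs ⁅ξ, η⁆ x = coadgs ξ (coadgs η x) - coadgs η (coadgs ξ x) := by
  have h : ∀ ζ : gs,
      p (coadgs ⁅ξ, η⁆ x - (coadgs ξ (coadgs η x) - coadgs η (coadgs ξ x))) ζ = 0 := by
    intro ζ
    have hzz : (⁅ζ, ⁅ξ, η⁆⁆ : gs) = ⁅⁅ζ, ξ⁆, η⁆ - ⁅⁅ζ, η⁆, ξ⁆ := by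
      rw [leibniz_lie, ← lie_skew ξ ⁅ζ, η⁆]; abel
    simp only [map_sub, LinearMap.sub_apply, hcoadgs, hzz]
    abel
  exact sub_eq_zero.mp (hp1 _ h)

/-- mixed identity in `g` (from the cocycle condition). -/
lemma mixed_g
    (hp1 : ∀ x : g, (∀ ξ : gs, p x ξ = 0) → x = 0)
    (hcoadg : ∀ (x y : g) (ξ : gs), p y (coadg x ξ) = p ⁅y, x⁆ ξ)
    (hcoadgs : ∀ (ξ η : gs) (x : g), p (coadgs ξ x) η = p x ⁅η, ξ⁆)
    (hcocycle : ∀ (x y : g) (ξ η : gs),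
      p ⁅x, y⁆ ⁅ξ, η⁆ =
        - p y ⁅coadg x ξ, η⁆ - p y ⁅ξ, coadg x η⁆
        + p x ⁅coadg y ξ, η⁆ + p x ⁅ξ, coadg y η⁆)
    (x y : g) (ζ : gs) :
    -⁅x, coadgs ζ y⁆ - coadgs (coadg y ζ) x + coadgs ζ ⁅x, y⁆
      + ⁅y, coadgs ζ x⁆ + coadgs (coadg x ζ) y = 0 := by
  apply hp1
  intro θ
  have t1 : p ⁅x, coadgs ζ y⁆ θ = - p y ⁅coadg x θ, ζ⁆ := by
    rw [← lie_skew x (coadgs ζ y), map_neg, LinearMap.neg_apply,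
      ← hcoadg x (coadgs ζ y) θ, hcoadgs ζ (coadg x θ) y]
  have t4 : p ⁅y, coadgs ζ x⁆ θ = - p x ⁅coadg y θ, ζ⁆ := by
    rw [← lie_skew y (coadgs ζ x), map_neg, LinearMap.neg_apply,
      ← hcoadg y (coadgs ζ x) θ, hcoadgs ζ (coadg y θ) x]
  have t2 := hcoadgs (coadg y ζ) θ x
  have t3 := hcoadgs ζ θ ⁅x, y⁆
  have t5 := hcoadgs (coadg x ζ) θ y
  have hc := hcocycle x y θ ζ
  simp only [map_add, map_sub, map_neg, LinearMap.add_apply, LinearMap.sub_apply,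
    LinearMap.neg_apply, LinearMap.zero_apply, map_zero, t1, t2, t3, t4, t5]
  linarith

/-- mixed identity in `gs` (from the cocycle condition). -/
lemma mixed_gs
    (hp2 : ∀ ξ : gs, (∀ x : g, p x ξ = 0) → ξ = 0)
    (hcoadg : ∀ (x y : g) (ξ : gs), p y (coadg x ξ) = p ⁅y, x⁆ ξ)
    (hcoadgs : ∀ (ξ η : gs) (x : g), p (coadgs ξ x) η = p x ⁅η, ξ⁆)
    (hcocycle : ∀ (x y : g) (ξ η : gs),
      p ⁅x, y⁆ ⁅ξ, η⁆ =
        - p y ⁅coadg x ξ, η⁆ - p y ⁅ξ, coadg x η⁆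
        + p x ⁅coadg y ξ, η⁆ + p x ⁅ξ, coadg y η⁆)
    (x : g) (η ζ : gs) :
    coadg x ⁅η, ζ⁆ - ⁅coadg x η, ζ⁆ - ⁅η, coadg x ζ⁆
      + coadg (coadgs η x) ζ - coadg (coadgs ζ x) η = 0 := by
  apply hp2
  intro a
  have s1 := hcoadg x a ⁅η, ζ⁆
  have s2 : p a (coadg (coadgs η x) ζ) = p x ⁅η, coadg a ζ⁆ := by
    rw [hcoadg (coadgs η x) a ζ, ← lie_skew a (coadgs η x), map_neg,
      LinearMap.neg_apply, ← hcoadg a (coadgs η x) ζ, hcoadgs η (coadg a ζ) x,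
      ← lie_skew η (coadg a ζ), map_neg]
  have s3 : p a (coadg (coadgs ζ x) η) = p x ⁅ζ, coadg a η⁆ := by
    rw [hcoadg (coadgs ζ x) a η, ← lie_skew a (coadgs ζ x), map_neg,
      LinearMap.neg_apply, ← hcoadg a (coadgs ζ x) η, hcoadgs ζ (coadg a η) x,
      ← lie_skew ζ (coadg a η), map_neg]
  have s4 : p x ⁅ζ, coadg a η⁆ = - p x ⁅coadg a η, ζ⁆ := by
    rw [← lie_skew ζ (coadg a η), map_neg]
  have s5 : p x ⁅η, coadg a ζ⁆ = - p x ⁅coadg a ζ, η⁆ := by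
    rw [← lie_skew η (coadg a ζ), map_neg]
  have hc := hcocycle a x η ζ
  simp only [map_add, map_sub, map_neg, LinearMap.add_apply, LinearMap.sub_apply,
    LinearMap.neg_apply, s1, s2, s3]
  linarith

end Pairing



lemma J_GGG (x y z : g) : Jc (BD coadg coadgs) (x, 0) (y, 0) (z, 0) = 0 := by
  simp only [Jc, BD, map_zero, LinearMap.zero_apply, lie_zero, zero_lie,
    add_zero, zero_add, sub_zero, zero_sub, Prod.mk_sub_mk, Prod.mk_add_mk]
  rw [Prod.mk_eq_zero]
  refine ⟨?_, rfl⟩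
  rw [leibniz_lie x y z]; abel

lemma J_SSS (ξ η ζ : gs) : Jc (BD coadg coadgs) (0, ξ) (0, η) (0, ζ) = 0 := by
  simp only [Jc, BD, map_zero, LinearMap.zero_apply, lie_zero, zero_lie,
    add_zero, zero_add, sub_zero, zero_sub, Prod.mk_sub_mk, Prod.mk_add_mk]
  rw [Prod.mk_eq_zero]
  refine ⟨rfl, ?_⟩
  rw [leibniz_lie ξ η ζ]; abel

lemma J_GGS (p : g →ₗ[ℝ] gs →ₗ[ℝ] ℝ)
    (hp1 : ∀ x : g, (∀ ξ : gs, p x ξ = 0) → x = 0)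
    (hp2 : ∀ ξ : gs, (∀ x : g, p x ξ = 0) → ξ = 0)
    (hcoadg : ∀ (x y : g) (ξ : gs), p y (coadg x ξ) = p ⁅y, x⁆ ξ)
    (hcoadgs : ∀ (ξ η : gs) (x : g), p (coadgs ξ x) η = p x ⁅η, ξ⁆)
    (hcocycle : ∀ (x y : g) (ξ η : gs),
      p ⁅x, y⁆ ⁅ξ, η⁆ =
        - p y ⁅coadg x ξ, η⁆ - p y ⁅ξ, coadg x η⁆
        + p x ⁅coadg y ξ, η⁆ + p x ⁅ξ, coadg y η⁆)
    (x y : g) (ζ : gs) : Jc (BD coadg coadgs) (x, 0) (y, 0) (0, ζ) = 0 := by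
  simp only [Jc, BD, map_zero, LinearMap.zero_apply, lie_zero, zero_lie,
    add_zero, zero_add, sub_zero, zero_sub, neg_zero, neg_neg, map_neg,
    LinearMap.neg_apply, lie_neg, neg_lie, Prod.mk_sub_mk, Prod.mk_add_mk]
  rw [Prod.mk_eq_zero]
  constructor
  · have h := mixed_g coadg coadgs p hp1 hcoadg hcoadgs hcocycle x y ζ
    abel_nf at h ⊢
    exact h
  · rw [coadg_rep coadg p hp2 hcoadg x y ζ]; abel

lemma J_GSS (p : g →ₗ[ℝ] gs →ₗ[ℝ] ℝ)
    (hp1 : ∀ x : g, (∀ ξ : gs, p x ξ = 0) → x = 0)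
    (hp2 : ∀ ξ : gs, (∀ x : g, p x ξ = 0) → ξ = 0)
    (hcoadg : ∀ (x y : g) (ξ : gs), p y (coadg x ξ) = p ⁅y, x⁆ ξ)
    (hcoadgs : ∀ (ξ η : gs) (x : g), p (coadgs ξ x) η = p x ⁅η, ξ⁆)
    (hcocycle : ∀ (x y : g) (ξ η : gs),
      p ⁅x, y⁆ ⁅ξ, η⁆ =
        - p y ⁅coadg x ξ, η⁆ - p y ⁅ξ, coadg x η⁆
        + p x ⁅coadg y ξ, η⁆ + p x ⁅ξ, coadg y η⁆)
    (x : g) (η ζ : gs) : Jc (BD coadg coadgs) (x, 0) (0, η) (0, ζ) = 0 := by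
  simp only [Jc, BD, map_zero, LinearMap.zero_apply, lie_zero, zero_lie,
    add_zero, zero_add, sub_zero, zero_sub, neg_zero, neg_neg, map_neg,
    LinearMap.neg_apply, lie_neg, neg_lie, Prod.mk_sub_mk, Prod.mk_add_mk]
  rw [Prod.mk_eq_zero]
  constructor
  · rw [coadgs_rep coadgs p hp1 hcoadgs η ζ x]; abel
  · have h := mixed_gs coadg coadgs p hp2 hcoadg hcoadgs hcocycle x η ζ
    abel_nf at h ⊢
    exact h



lemma Jc_zero (p : g →ₗ[ℝ] gs →ₗ[ℝ] ℝ)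
    (hp1 : ∀ x : g, (∀ ξ : gs, p x ξ = 0) → x = 0)
    (hp2 : ∀ ξ : gs, (∀ x : g, p x ξ = 0) → ξ = 0)
    (hcoadg : ∀ (x y : g) (ξ : gs), p y (coadg x ξ) = p ⁅y, x⁆ ξ)
    (hcoadgs : ∀ (ξ η : gs) (x : g), p (coadgs ξ x) η = p x ⁅η, ξ⁆)
    (hcocycle : ∀ (x y : g) (ξ η : gs),
      p ⁅x, y⁆ ⁅ξ, η⁆ =
        - p y ⁅coadg x ξ, η⁆ - p y ⁅ξ, coadg x η⁆
        + p x ⁅coadg y ξ, η⁆ + p x ⁅ξ, coadg y η⁆)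
    (u v w : g × gs) : Jc (BD coadg coadgs) u v w = 0 := by
  obtain ⟨x, ξ⟩ := u; obtain ⟨y, η⟩ := v; obtain ⟨z, ζ⟩ := w
  have hu : ((x, ξ) : g × gs) = (x, 0) + (0, ξ) := by simp
  have hv : ((y, η) : g × gs) = (y, 0) + (0, η) := by simp
  have hw : ((z, ζ) : g × gs) = (z, 0) + (0, ζ) := by simp
  rw [hu, hv, hw]
  simp only [Jc_add₁ coadg coadgs, Jc_add₂ coadg coadgs, Jc_add₃ coadg coadgs]
  have h1 := J_GGG coadg coadgs x y z
  have h8 := J_SSS coadg coadgs ξ η ζ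
  have h2 := J_GGS coadg coadgs p hp1 hp2 hcoadg hcoadgs hcocycle x y ζ
  have h5 := J_GSS coadg coadgs p hp1 hp2 hcoadg hcoadgs hcocycle x η ζ
  have h3 : Jc (BD coadg coadgs) (x, 0) (0, η) (z, 0) = 0 := by
    rw [Jc_cyclic, Jc_cyclic]
    exact J_GGS coadg coadgs p hp1 hp2 hcoadg hcoadgs hcocycle z x η
  have h4 : Jc (BD coadg coadgs) ((0 : g), ξ) (y, 0) (z, 0) = 0 := by
    rw [Jc_cyclic]
    exact J_GGS coadg coadgs p hp1 hp2 hcoadg hcoadgs hcocycle y z ξ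
  have h6 : Jc (BD coadg coadgs) ((0 : g), ξ) (y, 0) ((0 : g), ζ) = 0 := by
    rw [Jc_cyclic]
    exact J_GSS coadg coadgs p hp1 hp2 hcoadg hcoadgs hcocycle y ζ ξ
  have h7 : Jc (BD coadg coadgs) ((0 : g), ξ) ((0 : g), η) (z, 0) = 0 := by
    rw [Jc_cyclic, Jc_cyclic]
    exact J_GSS coadg coadgs p hp1 hp2 hcoadg hcoadgs hcocycle z ξ η
  rw [h1, h2, h3, h4, h5, h6, h7, h8]
  simp

end DoubleAux



/-- Let `(g, δ)` be a finite-dimensional Lie bialgebra, presented here via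
an abstract dual `gs` with a perfect pairing `p`, a Lie bracket on `gs` (dual to `δ`),
the coadjoint-type actions `coadg = ad*_x` and `coadgs = ad*_ξ`, and the cocycle
compatibility condition.  Then the Drinfeld double bracket
`[x+ξ, y+η] = [x,y] + ad*_ξ y − ad*_η x + [ξ,η] + ad*_x η − ad*_y ξ` on `d = g ⊕ g*`
is a Lie bracket: it is skew-symmetric and satisfies the Jacobi identity. -/
theorem double_bracket_is_lie_bracket
    (g gs : Type) [LieRing g] [LieAlgebra ℝ g] [LieRing gs] [LieAlgebra ℝ gs]
    [FiniteDimensional ℝ g] [FiniteDimensional ℝ gs]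
    -- a perfect pairing between `g` and its "dual" `gs`
    (p : g →ₗ[ℝ] gs →ₗ[ℝ] ℝ)
    (hp1 : ∀ x : g, (∀ ξ : gs, p x ξ = 0) → x = 0)
    (hp2 : ∀ ξ : gs, (∀ x : g, p x ξ = 0) → ξ = 0)
    -- `coadg x ξ = ad*_x ξ`, characterized by `(ad*_x ξ, y) = (ξ, [y,x])`
    (coadg : g →ₗ[ℝ] gs →ₗ[ℝ] gs)
    (hcoadg : ∀ (x y : g) (ξ : gs), p y (coadg x ξ) = p ⁅y, x⁆ ξ)
    -- `coadgs ξ x = ad*_ξ x`, characterized by `(ad*_ξ x, η) = (x, [η,ξ])`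
    (coadgs : gs →ₗ[ℝ] g →ₗ[ℝ] g)
    (hcoadgs : ∀ (ξ η : gs) (x : g), p (coadgs ξ x) η = p x ⁅η, ξ⁆)
    -- the Lie bialgebra cocycle condition `δ[x,y] = ad_x δ(y) − ad_y δ(x)`,
    -- written out against the pairing (with `δ(z)(ξ∧η) = ⟨z, [ξ,η]⟩`)
    (hcocycle : ∀ (x y : g) (ξ η : gs),
      p ⁅x, y⁆ ⁅ξ, η⁆ =
        - p y ⁅coadg x ξ, η⁆ - p y ⁅ξ, coadg x η⁆
        + p x ⁅coadg y ξ, η⁆ + p x ⁅ξ, coadg y η⁆) :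
    -- the Drinfeld double bracket on `d = g ⊕ g*`
    let Bd : g × gs → g × gs → g × gs := fun u v =>
      (⁅u.1, v.1⁆ + coadgs u.2 v.1 - coadgs v.2 u.1,
       ⁅u.2, v.2⁆ + coadg u.1 v.2 - coadg v.1 u.2)
    -- skew-symmetry and the Jacobi identity (in Leibniz form)
    (∀ u v : g × gs, Bd u v = - Bd v u) ∧
    (∀ u v w : g × gs, Bd u (Bd v w) = Bd (Bd u v) w + Bd v (Bd u w)) := by
  intro Bd
  have hBd : Bd = DoubleAux.BD coadg coadgs := rfl
  constructor
  · intro u v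
    rw [hBd]
    exact DoubleAux.BD_skew coadg coadgs u v
  · intro u v w
    have h := DoubleAux.Jc_zero coadg coadgs p hp1 hp2 hcoadg hcoadgs hcocycle u v w
    simp only [DoubleAux.Jc] at h
    rw [hBd]
    rwa [sub_sub, sub_eq_zero] at h
end

section
/- Let h be a subspace of a finite-dimensional vector space g and h⁰ = {ξ ∈ g* : ξ|_h = 0}. Equip d = g ⊕ g* with the pairing ⟨x+ξ, y+η⟩ = ξ(y) + η(x). Then the map r ↦ l_r := {x + ξ : ξ ∈ h⁰, q(x) = ι_ξ r} is a bijection between ∧²(g/h) and the set of Lagrangian subspaces l of d (i.e. ⟨l, l⟩ = 0 and dim l = dim g) satisfying l ∩ g = h, where q: g → g/h is the projection and ι_ξ r ∈ g/h denotes contraction. -/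
open Module

/-- Auxiliary: construction of the subspace `l_e` and its properties, with the dual
space abstracted to a general space `W` to avoid instance issues. -/
theorem aux_lag_part1 {g W : Type} [AddCommGroup g] [Module ℝ g] [FiniteDimensional ℝ g]
    [AddCommGroup W] [Module ℝ W] [FiniteDimensional ℝ W]
    (h : Submodule ℝ g) (A : Submodule ℝ W)
    (hAdim : Module.finrank ℝ A + Module.finrank ℝ h = Module.finrank ℝ g)
    (e : A →ₗ[ℝ] g ⧸ h) :
    ∃ l : Submodule ℝ (g × W),
      (∀ u : g × W, u ∈ l ↔ ∃ hm : u.2 ∈ A, Submodule.Quotient.mk u.1 = e ⟨u.2, hm⟩)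
      ∧ Module.finrank ℝ l = Module.finrank ℝ g
      ∧ l ⊓ LinearMap.ker (LinearMap.snd ℝ g W) = h.map (LinearMap.inl ℝ g W) := by
  obtain ⟨σ, hσ⟩ := h.mkQ.exists_rightInverse_of_surjective h.range_mkQ
  have hσ' : ∀ y : g ⧸ h, Submodule.Quotient.mk (σ y) = y := by
    intro y
    have := congrArg (fun f => f y) hσ
    simpa using this
  set Φ : (A × h) →ₗ[ℝ] g × W :=
    LinearMap.prod
      (σ.comp (e.comp (LinearMap.fst ℝ A h)) + h.subtype.comp (LinearMap.snd ℝ A h))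
      (A.subtype.comp (LinearMap.fst ℝ A h)) with hΦ
  have Φ_apply : ∀ p : A × h, Φ p = (σ (e p.1) + (p.2 : g), (p.1 : W)) := fun p => rfl
  refine ⟨LinearMap.range Φ, ?_, ?_, ?_⟩
  · intro u
    constructor
    · rintro ⟨⟨ξ, w⟩, rfl⟩
      refine ⟨ξ.2, ?_⟩
      have h1 : Submodule.Quotient.mk (σ (e ξ) + (w : g)) = e ξ := by
        rw [Submodule.Quotient.mk_add, hσ' (e ξ),
          (Submodule.Quotient.mk_eq_zero _).mpr w.2, add_zero]
      exact h1
    · rintro ⟨hm, hq⟩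
      set ξ : A := ⟨u.2, hm⟩
      have hw : u.1 - σ (e ξ) ∈ h := by
        rw [← Submodule.Quotient.eq]
        rw [hq, hσ' (e ξ)]
      refine ⟨(ξ, ⟨u.1 - σ (e ξ), hw⟩), ?_⟩
      rw [Φ_apply]
      refine Prod.ext ?_ rfl
      show σ (e ξ) + (u.1 - σ (e ξ)) = u.1
      abel
  · have hinj : Function.Injective Φ := by
      intro p q hpq
      have h2 : (p.1 : W) = (q.1 : W) := congrArg Prod.snd hpq
      have h1 : p.1 = q.1 := Subtype.ext h2
      have h3 : σ (e p.1) + (p.2 : g) = σ (e q.1) + (q.2 : g) := congrArg Prod.fst hpq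
      rw [h1] at h3
      have h4 : (p.2 : g) = (q.2 : g) := by
        have := add_left_cancel h3
        exact this
      exact Prod.ext h1 (Subtype.ext h4)
    rw [LinearMap.finrank_range_of_inj hinj, Module.finrank_prod, hAdim]
  · apply le_antisymm
    · rintro u ⟨hul, hug⟩
      have hu2 : u.2 = 0 := hug
      obtain ⟨⟨ξ, w⟩, rfl⟩ := hul
      rw [Φ_apply] at hu2 ⊢
      simp only at hu2
      have hξ : ξ = 0 := Subtype.ext hu2
      refine Submodule.mem_map.mpr ⟨(w : g), w.2, ?_⟩
      rw [LinearMap.inl_apply]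
      refine Prod.ext ?_ ?_
      · simp [hξ]
      · simp [hu2]
    · rintro u hu
      obtain ⟨x, hx, rfl⟩ := Submodule.mem_map.mp hu
      constructor
      · refine ⟨(0, ⟨x, hx⟩), ?_⟩
        rw [Φ_apply]
        refine Prod.ext ?_ ?_
        · simp
        · simp
      · simp [LinearMap.mem_ker]
  
set_option maxHeartbeats 1000000 in
set_option synthInstance.maxHeartbeats 200000 in
/-- Auxiliary: every Lagrangian-type subspace is of the form `l_e`, again with the dual
space abstracted. -/
theorem aux_lag_part2 {g W : Type} [AddCommGroup g] [Module ℝ g] [FiniteDimensional ℝ g]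
    [AddCommGroup W] [Module ℝ W] [FiniteDimensional ℝ W]
    (h : Submodule ℝ g) (A : Submodule ℝ W)
    (hAdim : Module.finrank ℝ A + Module.finrank ℝ h = Module.finrank ℝ g)
    (l : Submodule ℝ (g × W))
    (hrank : Module.finrank ℝ l = Module.finrank ℝ g)
    (hinf : l ⊓ LinearMap.ker (LinearMap.snd ℝ g W) = h.map (LinearMap.inl ℝ g W))
    (hmemA : ∀ u ∈ l, Prod.snd u ∈ A) :
    ∃ e : A →ₗ[ℝ] g ⧸ h, ∀ u : g × W,
      u ∈ l ↔ ∃ hm : u.2 ∈ A, Submodule.Quotient.mk u.1 = e ⟨u.2, hm⟩ := by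
  have mem_hsub : ∀ u : g × W, u ∈ h.map (LinearMap.inl ℝ g W) ↔ u.1 ∈ h ∧ u.2 = 0 := by
    intro u
    constructor
    · rintro ⟨x, hx, rfl⟩; exact ⟨hx, rfl⟩
    · rintro ⟨h1, h2⟩
      exact ⟨u.1, h1, Prod.ext rfl h2.symm⟩
  have finrank_hsub : Module.finrank ℝ (h.map (LinearMap.inl ℝ g W)) = Module.finrank ℝ h :=
    (Submodule.equivMapOfInjective _ LinearMap.inl_injective h).finrank_eq.symm
  have hsub_le : h.map (LinearMap.inl ℝ g W) ≤ l := hinf ▸ inf_le_left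
  -- the projection onto `A`
  let p2 : l →ₗ[ℝ] A :=
    { toFun := fun u => ⟨(u : g × W).2, hmemA _ u.2⟩
      map_add' := fun u v => Subtype.ext rfl
      map_smul' := fun c u => Subtype.ext rfl }
  have hker2 : LinearMap.ker p2 = Submodule.comap l.subtype (h.map (LinearMap.inl ℝ g W)) := by
    ext u
    simp only [LinearMap.mem_ker, Submodule.mem_comap, Submodule.coe_subtype]
    constructor
    · intro hu
      have h2 : (u : g × W).2 = 0 := congrArg Subtype.val hu
      have hmem : (u : g × W) ∈ l ⊓ LinearMap.ker (LinearMap.snd ℝ g W) := ⟨u.2, h2⟩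
      rw [hinf] at hmem
      exact hmem
    · intro hu
      exact Subtype.ext ((mem_hsub _).mp hu).2
  have hkerdim : Module.finrank ℝ
      (Submodule.comap l.subtype (h.map (LinearMap.inl ℝ g W))) = Module.finrank ℝ h := by
    rw [LinearEquiv.finrank_eq (Submodule.comapSubtypeEquivOfLe hsub_le), finrank_hsub]
  have hsurj2 : LinearMap.range p2 = ⊤ := by
    apply Submodule.eq_top_of_finrank_eq
    have h1 := LinearMap.finrank_range_add_finrank_ker p2
    rw [hker2, hkerdim, hrank] at h1
    omega
  obtain ⟨s, hs⟩ := p2.exists_rightInverse_of_surjective hsurj2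
  have hs' : ∀ ξ : A, ((s ξ : g × W)).2 = (ξ : W) := by
    intro ξ
    have h1 : p2 (s ξ) = ξ := by
      rw [← LinearMap.comp_apply, hs]; rfl
    exact congrArg Subtype.val h1
  set e : A →ₗ[ℝ] (g ⧸ h) :=
    (h.mkQ.comp ((LinearMap.fst ℝ g W).comp l.subtype)).comp s with hedef
  have he_apply : ∀ ξ : A, e ξ = Submodule.Quotient.mk ((s ξ : g × W)).1 := fun ξ => rfl
  refine ⟨e, fun u => ⟨?_, ?_⟩⟩
  · intro hu
    refine ⟨hmemA u hu, ?_⟩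
    set ξ : A := ⟨u.2, hmemA u hu⟩
    have hv2 : (s ξ : g × W).2 = u.2 := hs' ξ
    have hdl : u - (s ξ : g × W) ∈ l := l.sub_mem hu (s ξ).2
    have hdg : (u - (s ξ : g × W)) ∈ LinearMap.ker (LinearMap.snd ℝ g W) := by
      rw [LinearMap.mem_ker]
      show u.2 - (s ξ : g × W).2 = 0
      rw [hv2, sub_self]
    have hmem : u - (s ξ : g × W) ∈ h.map (LinearMap.inl ℝ g W) := hinf ▸ ⟨hdl, hdg⟩
    have hh : u.1 - (s ξ : g × W).1 ∈ h := ((mem_hsub _).mp hmem).1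
    rw [he_apply]
    exact (Submodule.Quotient.eq _).mpr hh
  · rintro ⟨hm, hq⟩
    set ξ : A := ⟨u.2, hm⟩
    have hdiff : u.1 - (s ξ : g × W).1 ∈ h := by
      rw [← Submodule.Quotient.eq, hq, he_apply]
    have hmem : ((u.1 - (s ξ : g × W).1, 0) : g × W) ∈ l :=
      hsub_le ((mem_hsub _).mpr ⟨hdiff, rfl⟩)
    have h1 := l.add_mem (s ξ).2 hmem
    have heq : ((s ξ : g × W) + (u.1 - (s ξ : g × W).1, 0)) = u := by
      refine Prod.ext ?_ ?_
      · show (s ξ : g × W).1 + (u.1 - (s ξ : g × W).1) = u.1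
        abel
      · show (s ξ : g × W).2 + 0 = u.2
        rw [hs' ξ, add_zero]
    rwa [heq] at h1

/-- Let `h` be a subspace of a finite-dimensional vector space `g`,
`h⁰ = {ξ ∈ g* : ξ|_h = 0}`, and equip `d = g ⊕ g*` with the pairing
`⟨x+ξ, y+η⟩ = ξ(y) + η(x)`.  Then `r ↦ l_r := {x + ξ : ξ ∈ h⁰, q(x) = ι_ξ r}` is a
bijection between `∧²(g/h)` (encoded as skew-symmetric linear maps
`(g/h)* ≅ h⁰ → g/h`) and the set of Lagrangian subspaces `l` of `d` with `l ∩ g = h`.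
The bijection is expressed as: every skew `e` arises as the contraction map of a unique
such Lagrangian subspace, and every such Lagrangian subspace has this form for a
unique skew `e`. -/
theorem lagrangian_subspace_correspondence
    (g : Type) [AddCommGroup g] [Module ℝ g] [FiniteDimensional ℝ g]
    (h : Submodule ℝ g) :
    -- the pairing on `d = g × g*`
    let pr : (g × Module.Dual ℝ g) → (g × Module.Dual ℝ g) → ℝ :=
      fun u v => u.2 v.1 + v.2 u.1
    -- `g` and `h` viewed as subspaces of `d`
    let gsub : Submodule ℝ (g × Module.Dual ℝ g) :=
      LinearMap.ker (LinearMap.snd ℝ g (Module.Dual ℝ g))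
    let hsub : Submodule ℝ (g × Module.Dual ℝ g) :=
      h.map (LinearMap.inl ℝ g (Module.Dual ℝ g))
    -- Lagrangian: isotropic of dimension `dim g`
    let IsLag : Submodule ℝ (g × Module.Dual ℝ g) → Prop := fun l =>
      (∀ u ∈ l, ∀ v ∈ l, pr u v = 0) ∧ Module.finrank ℝ l = Module.finrank ℝ g
    -- `e : h⁰ → g/h` encodes an element `r` of `∧²(g/h)` via `e ξ = ι_ξ r`; skewness:
    let Skew : (h.dualAnnihilator →ₗ[ℝ] (g ⧸ h)) → Prop := fun e =>
      ∀ (ξ η : h.dualAnnihilator) (x y : g),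
        Submodule.Quotient.mk x = e ξ → Submodule.Quotient.mk y = e η →
          (ξ : Module.Dual ℝ g) y = - (η : Module.Dual ℝ g) x
    -- the set `l_r = {x + ξ : ξ ∈ h⁰, q(x) = ι_ξ r}`
    let carrier : (h.dualAnnihilator →ₗ[ℝ] (g ⧸ h)) → Set (g × Module.Dual ℝ g) :=
      fun e => {u | ∃ hm : u.2 ∈ h.dualAnnihilator,
        Submodule.Quotient.mk u.1 = e ⟨u.2, hm⟩}
    -- the correspondence is a bijection
    (∀ e, Skew e → ∃ l : Submodule ℝ (g × Module.Dual ℝ g),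
        (l : Set (g × Module.Dual ℝ g)) = carrier e ∧ IsLag l ∧ l ⊓ gsub = hsub) ∧
    (∀ l : Submodule ℝ (g × Module.Dual ℝ g), IsLag l → l ⊓ gsub = hsub →
        ∃! e : h.dualAnnihilator →ₗ[ℝ] (g ⧸ h),
          Skew e ∧ (l : Set (g × Module.Dual ℝ g)) = carrier e) := by
  intro pr gsub hsub IsLag Skew carrier
  have hAdim : Module.finrank ℝ h.dualAnnihilator + Module.finrank ℝ h
      = Module.finrank ℝ g := by
    have e1 : Module.finrank ℝ h.dualAnnihilator = Module.finrank ℝ (g ⧸ h) :=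
      (Subspace.quotEquivAnnihilator h).finrank_eq.symm
    rw [e1, Submodule.finrank_quotient_add_finrank]
  constructor
  · -- Part 1
    intro e he
    obtain ⟨l, hmem, hfin, hinf⟩ := aux_lag_part1 h h.dualAnnihilator hAdim e
    refine ⟨l, ?_, ⟨?_, hfin⟩, hinf⟩
    · ext u
      exact hmem u
    · intro u hu v hv
      obtain ⟨hmu, hqu⟩ := (hmem u).mp hu
      obtain ⟨hmv, hqv⟩ := (hmem v).mp hv
      have hsk := he ⟨u.2, hmu⟩ ⟨v.2, hmv⟩ u.1 v.1 hqu hqv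
      simp only at hsk
      show u.2 v.1 + v.2 u.1 = 0
      linarith
  · -- Part 2
    intro l hlag hinf
    obtain ⟨hiso, hrank⟩ := hlag
    have hsub_le : hsub ≤ l := hinf ▸ inf_le_left
    have hmemA : ∀ u ∈ l, Prod.snd u ∈ h.dualAnnihilator := by
      intro u hu
      rw [Submodule.mem_dualAnnihilator]
      intro y hy
      have hyl : ((y, 0) : g × Module.Dual ℝ g) ∈ l :=
        hsub_le (Submodule.mem_map.mpr ⟨y, hy, rfl⟩)
      have h1 := hiso u hu (y, 0) hyl
      simpa [pr] using h1
    obtain ⟨e, hmem⟩ := aux_lag_part2 h h.dualAnnihilator hAdim l hrank hinf hmemA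
    have mem_of : ∀ (x : g) (ξ : h.dualAnnihilator),
        Submodule.Quotient.mk x = e ξ →
          ((x, (ξ : Module.Dual ℝ g)) : g × Module.Dual ℝ g) ∈ l := by
      intro x ξ hx
      exact (hmem _).mpr ⟨ξ.2, hx⟩
    have hcar : (l : Set (g × Module.Dual ℝ g)) = carrier e := by
      ext u
      exact hmem u
    have hskew : Skew e := by
      intro ξ η x y hx hy
      have h1 := hiso _ (mem_of x ξ hx) _ (mem_of y η hy)
      simp only [pr] at h1
      linarith
    refine ⟨e, ⟨hskew, hcar⟩, ?_⟩
    rintro e' ⟨hskew', hcar'⟩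
    ext ξ
    obtain ⟨x, hx⟩ := Submodule.Quotient.mk_surjective h (e' ξ)
    have hmm : ((x, (ξ : Module.Dual ℝ g)) : g × Module.Dual ℝ g) ∈ carrier e' :=
      ⟨ξ.2, hx⟩
    rw [← hcar'] at hmm
    obtain ⟨hm, hq⟩ := (hmem _).mp hmm
    have h2 : (⟨(ξ : Module.Dual ℝ g), hm⟩ : h.dualAnnihilator) = ξ := Subtype.ext rfl
    rw [h2] at hq
    rw [← hx, hq]
end

section
/- Every Lagrangian subspace l of d = g ⊕ g* (with respect to ⟨x+ξ, y+η⟩ = ξ(y)+η(x)) with l ∩ g = h has the form l = {x + Λξ + ξ : x ∈ h, ξ ∈ h⁰} for any Λ ∈ ∧²g whose image in ∧²(g/h) corresponds to l, where Λξ := ι_ξ Λ ∈ g. -/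
/-- Every Lagrangian subspace `l` of `d = g ⊕ g*` (with respect to
`⟨x+ξ, y+η⟩ = ξ(y)+η(x)`) with `l ∩ g = h` has the form
`l = {x + Λξ + ξ : x ∈ h, ξ ∈ h⁰}` for any `Λ ∈ ∧²g` (encoded as a skew linear map
`L : g* → g`, `L ξ = ι_ξ Λ = Λξ`) whose image in `∧²(g/h)` corresponds to `l`,
the latter condition being expressed by `Λξ + ξ ∈ l` for all `ξ ∈ h⁰`. -/
theorem lagrangian_subspace_from_Lambda
    (g : Type) [AddCommGroup g] [Module ℝ g] [FiniteDimensional ℝ g]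
    (h : Submodule ℝ g)
    (l : Submodule ℝ (g × Module.Dual ℝ g))
    -- `l` is Lagrangian
    (hiso : ∀ u ∈ l, ∀ v ∈ l, u.2 v.1 + v.2 u.1 = 0)
    (hdim : Module.finrank ℝ l = Module.finrank ℝ g)
    -- `l ∩ g = h`
    (hlg : l ⊓ LinearMap.ker (LinearMap.snd ℝ g (Module.Dual ℝ g)) =
      h.map (LinearMap.inl ℝ g (Module.Dual ℝ g)))
    -- `Λ` as a skew-symmetric contraction map `L ξ = Λξ`
    (L : Module.Dual ℝ g →ₗ[ℝ] g)
    (hLskew : ∀ ξ η : Module.Dual ℝ g, ξ (L η) = - η (L ξ))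
    -- the image of `Λ` in `∧²(g/h)` corresponds to `l`
    (hcorr : ∀ ξ : Module.Dual ℝ g, (∀ x ∈ h, ξ x = 0) → (L ξ, ξ) ∈ l) :
    (l : Set (g × Module.Dual ℝ g)) =
      {u | ∃ (x : g) (ξ : Module.Dual ℝ g),
        x ∈ h ∧ (∀ y ∈ h, ξ y = 0) ∧ u = (x + L ξ, ξ)} := by
  have hhl : ∀ y ∈ h, ((y, 0) : g × Module.Dual ℝ g) ∈ l := by
    intro y hy
    have : ((y, 0) : g × Module.Dual ℝ g) ∈
        h.map (LinearMap.inl ℝ g (Module.Dual ℝ g)) := ⟨y, hy, rfl⟩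
    rw [← hlg] at this
    exact this.1
  ext u
  simp only [Set.mem_setOf_eq, SetLike.mem_coe]
  constructor
  · intro hu
    have hξ : ∀ y ∈ h, u.2 y = 0 := by
      intro y hy
      have := hiso u hu (y, 0) (hhl y hy)
      simpa using this
    have hL : (L u.2, u.2) ∈ l := hcorr u.2 hξ
    have hdiff : ((u.1 - L u.2, 0) : g × Module.Dual ℝ g) ∈ l := by
      have := l.sub_mem hu hL
      have heq : u - (L u.2, u.2) = ((u.1 - L u.2, 0) : g × Module.Dual ℝ g) := by
        simp [Prod.ext_iff]
      rwa [heq] at this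
    have hmem : ((u.1 - L u.2, 0) : g × Module.Dual ℝ g) ∈
        h.map (LinearMap.inl ℝ g (Module.Dual ℝ g)) := by
      rw [← hlg]
      exact ⟨hdiff, by simp⟩
    obtain ⟨x, hx, hxe⟩ := hmem
    have hx1 : x = u.1 - L u.2 := by
      simpa [Prod.ext_iff] using hxe
    refine ⟨u.1 - L u.2, u.2, hx1 ▸ hx, hξ, ?_⟩
    simp [Prod.ext_iff]
  · rintro ⟨x, ξ, hx, hξ, rfl⟩
    have := l.add_mem (hhl x hx) (hcorr ξ hξ)
    have heq : ((x, 0) : g × Module.Dual ℝ g) + (L ξ, ξ) = (x + L ξ, ξ) := by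
      simp [Prod.ext_iff]
    rwa [heq] at this
end

section
/- Let l be a Lagrangian subalgebra of the double d of a Lie bialgebra (g, δ) with l ∩ g = h, and suppose [h, l] ⊆ l. Then h⁰ = {ξ ∈ g* : ξ|_h = 0} is closed under the bracket [ξ,η]_Λ := [ξ,η] + ad*_{Λξ} η − ad*_{Λη} ξ on g*, where Λ ∈ ∧²g is any element with l = {x + Λξ + ξ : x ∈ h, ξ ∈ h⁰}. -/
/-- Let `l` be a Lagrangian subalgebra of the double `d = g ⊕ g*` of a
Lie bialgebra `(g, δ)` with `l ∩ g = h` and `[h, l] ⊆ l`.  Then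
`h⁰ = {ξ ∈ g* : ξ|_h = 0}` is closed under the bracket
`[ξ,η]_Λ := [ξ,η] + ad*_{Λξ} η − ad*_{Λη} ξ` on `g*`, where `Λ ∈ ∧²g` (encoded as a
skew map `L`, `L ξ = Λξ = ι_ξΛ`) is any element with
`l = {x + Λξ + ξ : x ∈ h, ξ ∈ h⁰}`. -/
theorem h0_closed_under_Lambda_bracket
    (g gs : Type) [LieRing g] [LieAlgebra ℝ g] [LieRing gs] [LieAlgebra ℝ gs]
    [FiniteDimensional ℝ g] [FiniteDimensional ℝ gs]
    (p : g →ₗ[ℝ] gs →ₗ[ℝ] ℝ)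
    (hp1 : ∀ x : g, (∀ ξ : gs, p x ξ = 0) → x = 0)
    (hp2 : ∀ ξ : gs, (∀ x : g, p x ξ = 0) → ξ = 0)
    (coadg : g →ₗ[ℝ] gs →ₗ[ℝ] gs)
    (hcoadg : ∀ (x y : g) (ξ : gs), p y (coadg x ξ) = p ⁅y, x⁆ ξ)
    (coadgs : gs →ₗ[ℝ] g →ₗ[ℝ] g)
    (hcoadgs : ∀ (ξ η : gs) (x : g), p (coadgs ξ x) η = p x ⁅η, ξ⁆)
    (hcocycle : ∀ (x y : g) (ξ η : gs),
      p ⁅x, y⁆ ⁅ξ, η⁆ =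
        - p y ⁅coadg x ξ, η⁆ - p y ⁅ξ, coadg x η⁆
        + p x ⁅coadg y ξ, η⁆ + p x ⁅ξ, coadg y η⁆) :
    -- the Drinfeld double bracket and pairing on `d = g × gs`
    let Bd : g × gs → g × gs → g × gs := fun u v =>
      (⁅u.1, v.1⁆ + coadgs u.2 v.1 - coadgs v.2 u.1,
       ⁅u.2, v.2⁆ + coadg u.1 v.2 - coadg v.1 u.2)
    let pr : g × gs → g × gs → ℝ := fun u v => p v.1 u.2 + p u.1 v.2
    ∀ (l : Submodule ℝ (g × gs)) (hsub : Submodule ℝ g) (L : gs →ₗ[ℝ] g),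
      -- `l` is Lagrangian
      (∀ u ∈ l, ∀ v ∈ l, pr u v = 0) →
      Module.finrank ℝ l = Module.finrank ℝ g →
      -- `l` is a Lie subalgebra of `d`
      (∀ u ∈ l, ∀ v ∈ l, Bd u v ∈ l) →
      -- `h = l ∩ g`
      (∀ x : g, x ∈ hsub ↔ ((x, 0) : g × gs) ∈ l) →
      -- `[h, l] ⊆ l`
      (∀ x ∈ hsub, ∀ u ∈ l, Bd ((x, 0) : g × gs) u ∈ l) →
      -- `Λ` is skew
      (∀ ξ η : gs, p (L ξ) η = - p (L η) ξ) →
      -- `l = {x + Λξ + ξ : x ∈ h, ξ ∈ h⁰}`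
      ((l : Set (g × gs)) = {u | ∃ x ∈ hsub, ∃ ξ : gs,
          (∀ y ∈ hsub, p y ξ = 0) ∧ u = (x + L ξ, ξ)}) →
      -- conclusion: `h⁰` is closed under `[·,·]_Λ`
      ∀ ξ η : gs, (∀ x ∈ hsub, p x ξ = 0) → (∀ x ∈ hsub, p x η = 0) →
        ∀ x ∈ hsub, p x (⁅ξ, η⁆ + coadg (L ξ) η - coadg (L η) ξ) = 0 := by
  intro Bd pr l hsub L hlag hdim hbr hcap hhl hskew hdesc ξ η hξ hη x hx
  have hu : ((L ξ, ξ) : g × gs) ∈ l := by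
    rw [← SetLike.mem_coe, hdesc]
    exact ⟨0, hsub.zero_mem, ξ, hξ, by simp⟩
  have hv : ((L η, η) : g × gs) ∈ l := by
    rw [← SetLike.mem_coe, hdesc]
    exact ⟨0, hsub.zero_mem, η, hη, by simp⟩
  have hw := hbr _ hu _ hv
  rw [← SetLike.mem_coe, hdesc] at hw
  obtain ⟨y, hy, ζ, hζ, heq⟩ := hw
  have h2 : ⁅ξ, η⁆ + coadg (L ξ) η - coadg (L η) ξ = ζ := congrArg Prod.snd heq
  rw [h2]
  exact hζ x hx
end

section
/- With notation as in the Drinfeld correspondence, let χ_{h⁰,Λ}(ξ) = tr(T_ξ) where T_ξ ∈ End(h⁰) is η ↦ [ξ,η]_Λ, let χ_l, χ_g, χ_{g*} be the adjoint characters (traces of the adjoint representations) of l, g, g*, and let bΛ = Σ_i [x_i, y_i] if Λ = Σ_i x_i ∧ y_i. Then for every ξ ∈ h⁰: χ_{h⁰,Λ}(ξ) + (bΛ, ξ) = ½(χ_l(Λξ + ξ) − χ_g(Λξ) + χ_{g*}(ξ)). -/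
open LinearMap

lemma trace_restrict_eq_trace_comp {V : Type*} [AddCommGroup V] [Module ℝ V]
    [FiniteDimensional ℝ V] (S : Submodule ℝ V) (f : V →ₗ[ℝ] V)
    (hf : ∀ v ∈ S, f v ∈ S) (P : V →ₗ[ℝ] V) (hP1 : ∀ v, P v ∈ S)
    (hP2 : ∀ v ∈ S, P v = v) :
    LinearMap.trace ℝ S (f.restrict hf) = LinearMap.trace ℝ V (f ∘ₗ P) := by
  have hπ : f.restrict hf = (P.codRestrict S hP1) ∘ₗ (f ∘ₗ S.subtype) := by
    ext v
    simp [LinearMap.restrict_apply, hP2 _ (hf v v.2)]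
  rw [hπ, LinearMap.trace_comp_comm']
  have : (f ∘ₗ S.subtype) ∘ₗ (P.codRestrict S hP1) = f ∘ₗ P := by
    ext v; simp
  rw [this]

lemma coord_eq_pair {n : ℕ} {g gs : Type} [AddCommGroup g] [Module ℝ g]
    [AddCommGroup gs] [Module ℝ gs]
    (p : g →ₗ[ℝ] gs →ₗ[ℝ] ℝ) (bg : Module.Basis (Fin n) ℝ g) (bgs : Module.Basis (Fin n) ℝ gs)
    (hdual : ∀ i j, p (bg i) (bgs j) = if i = j then (1:ℝ) else 0)
    (x : g) (i : Fin n) : p x (bgs i) = bg.repr x i := by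
  conv_lhs => rw [← bg.sum_repr x]
  rw [map_sum, LinearMap.sum_apply]
  simp only [map_smul, LinearMap.smul_apply, hdual, smul_eq_mul]
  simp [Finset.sum_ite_eq']

lemma coord_eq_pair' {n : ℕ} {g gs : Type} [AddCommGroup g] [Module ℝ g]
    [AddCommGroup gs] [Module ℝ gs]
    (p : g →ₗ[ℝ] gs →ₗ[ℝ] ℝ) (bg : Module.Basis (Fin n) ℝ g) (bgs : Module.Basis (Fin n) ℝ gs)
    (hdual : ∀ i j, p (bg i) (bgs j) = if i = j then (1:ℝ) else 0)
    (η : gs) (i : Fin n) : p (bg i) η = bgs.repr η i := by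
  conv_lhs => rw [← bgs.sum_repr η]
  rw [map_sum]
  simp only [map_smul, smul_eq_mul, hdual]
  simp [Finset.sum_ite_eq']

lemma trace_eq_sum_g {n : ℕ} {g gs : Type} [AddCommGroup g] [Module ℝ g]
    [AddCommGroup gs] [Module ℝ gs]
    (p : g →ₗ[ℝ] gs →ₗ[ℝ] ℝ) (bg : Module.Basis (Fin n) ℝ g) (bgs : Module.Basis (Fin n) ℝ gs)
    (hdual : ∀ i j, p (bg i) (bgs j) = if i = j then (1:ℝ) else 0)
    (M : g →ₗ[ℝ] g) : LinearMap.trace ℝ g M = ∑ i, p (M (bg i)) (bgs i) := by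
  rw [LinearMap.trace_eq_matrix_trace ℝ bg, Matrix.trace]
  congr 1
  funext i
  rw [Matrix.diag_apply, LinearMap.toMatrix_apply, ← coord_eq_pair p bg bgs hdual]

lemma trace_eq_sum_gs {n : ℕ} {g gs : Type} [AddCommGroup g] [Module ℝ g]
    [AddCommGroup gs] [Module ℝ gs]
    (p : g →ₗ[ℝ] gs →ₗ[ℝ] ℝ) (bg : Module.Basis (Fin n) ℝ g) (bgs : Module.Basis (Fin n) ℝ gs)
    (hdual : ∀ i j, p (bg i) (bgs j) = if i = j then (1:ℝ) else 0)
    (M : gs →ₗ[ℝ] gs) : LinearMap.trace ℝ gs M = ∑ i, p (bg i) (M (bgs i)) := by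
  rw [LinearMap.trace_eq_matrix_trace ℝ bgs, Matrix.trace]
  congr 1
  funext i
  rw [Matrix.diag_apply, LinearMap.toMatrix_apply, ← coord_eq_pair' p bg bgs hdual]

lemma trace_prod_decomp (g gs : Type) [AddCommGroup g] [Module ℝ g]
    [AddCommGroup gs] [Module ℝ gs] [FiniteDimensional ℝ g] [FiniteDimensional ℝ gs]
    (F : (g × gs) →ₗ[ℝ] (g × gs)) :
    LinearMap.trace ℝ (g × gs) F
      = LinearMap.trace ℝ g (LinearMap.fst ℝ g gs ∘ₗ F ∘ₗ LinearMap.inl ℝ g gs)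
        + LinearMap.trace ℝ gs (LinearMap.snd ℝ g gs ∘ₗ F ∘ₗ LinearMap.inr ℝ g gs) := by
  conv_lhs => rw [show F = (LinearMap.inl ℝ g gs ∘ₗ (LinearMap.fst ℝ g gs ∘ₗ F))
      + (LinearMap.inr ℝ g gs ∘ₗ (LinearMap.snd ℝ g gs ∘ₗ F)) by
    ext v <;> simp]
  rw [map_add, LinearMap.trace_comp_comm' (LinearMap.fst ℝ g gs ∘ₗ F) (LinearMap.inl ℝ g gs),
    LinearMap.trace_comp_comm' (LinearMap.snd ℝ g gs ∘ₗ F) (LinearMap.inr ℝ g gs)]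
  rw [LinearMap.comp_assoc, LinearMap.comp_assoc]

lemma sum_pair_vanish {n : ℕ} (a s : Fin n → Fin n → ℝ) (ha : ∀ i j, a i j = a j i)
    (hs : ∀ i j, s i j = - s j i) :
    ∑ i, ∑ j, a i j * s i j = 0 := by
  have h : (∑ i, ∑ j, a i j * s i j) = ∑ i, ∑ j, -(a i j * s i j) := by
    conv_lhs => rw [Finset.sum_comm]
    refine Finset.sum_congr rfl fun i _ => Finset.sum_congr rfl fun j _ => ?_
    rw [ha j i, hs j i]; ring
  simp only [Finset.sum_neg_distrib] at h
  linarith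

lemma sum_swap_ops {n : ℕ} {g gs : Type} [AddCommGroup g] [Module ℝ g]
    [AddCommGroup gs] [Module ℝ gs]
    (p : g →ₗ[ℝ] gs →ₗ[ℝ] ℝ) (bg : Module.Basis (Fin n) ℝ g) (bgs : Module.Basis (Fin n) ℝ gs)
    (hdual : ∀ i j, p (bg i) (bgs j) = if i = j then (1:ℝ) else 0)
    (M M' : gs →ₗ[ℝ] gs) :
    ∑ i, p (bg i) (M (M' (bgs i))) = ∑ i, p (bg i) (M' (M (bgs i))) := by
  have hexp : ∀ η : gs, η = ∑ j, p (bg j) η • bgs j := by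
    intro η
    conv_lhs => rw [← bgs.sum_repr η]
    refine Finset.sum_congr rfl fun j _ => ?_
    rw [coord_eq_pair' p bg bgs hdual]
  have key : ∀ (M M' : gs →ₗ[ℝ] gs) (i : Fin n),
      p (bg i) (M (M' (bgs i))) = ∑ j, p (bg j) (M' (bgs i)) * p (bg i) (M (bgs j)) := by
    intro M M' i
    conv_lhs => rw [hexp (M' (bgs i)), map_sum]
    rw [map_sum]
    refine Finset.sum_congr rfl fun j _ => ?_
    rw [map_smul, map_smul, smul_eq_mul]
  simp only [key]
  rw [Finset.sum_comm]
  exact Finset.sum_congr rfl fun i _ => Finset.sum_congr rfl fun j _ => by ring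

/-- With notation as in the Drinfeld correspondence (Lie bialgebra
`(g, δ)` with abstract dual `gs`, double `d = g × gs`, Lagrangian subalgebra `l` with
`l ∩ g = h` and `l = {x + Λξ + ξ : x ∈ h, ξ ∈ h⁰}` for `Λ ∈ ∧²g` encoded by the skew
map `L ξ = Λξ`): let `χ_{h⁰,Λ}(ξ) = tr(T_ξ)` where `T_ξ : h⁰ → h⁰`, `η ↦ [ξ,η]_Λ`;
let `χ_l, χ_g, χ_{g*}` be the adjoint characters of `l, g, g*`; and let
`bΛ = Σ [x_i, y_i]` for `Λ = Σ x_i ∧ y_i`.  Then for every `ξ ∈ h⁰`: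
`χ_{h⁰,Λ}(ξ) + (bΛ, ξ) = ½(χ_l(Λξ + ξ) − χ_g(Λξ) + χ_{g*}(ξ))`. -/
theorem character_identity_on_h0
    (g gs : Type) [LieRing g] [LieAlgebra ℝ g] [LieRing gs] [LieAlgebra ℝ gs]
    [FiniteDimensional ℝ g] [FiniteDimensional ℝ gs]
    (p : g →ₗ[ℝ] gs →ₗ[ℝ] ℝ)
    (hp1 : ∀ x : g, (∀ ξ : gs, p x ξ = 0) → x = 0)
    (hp2 : ∀ ξ : gs, (∀ x : g, p x ξ = 0) → ξ = 0)
    (coadg : g →ₗ[ℝ] gs →ₗ[ℝ] gs)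
    (hcoadg : ∀ (x y : g) (ξ : gs), p y (coadg x ξ) = p ⁅y, x⁆ ξ)
    (coadgs : gs →ₗ[ℝ] g →ₗ[ℝ] g)
    (hcoadgs : ∀ (ξ η : gs) (x : g), p (coadgs ξ x) η = p x ⁅η, ξ⁆)
    (hcocycle : ∀ (x y : g) (ξ η : gs),
      p ⁅x, y⁆ ⁅ξ, η⁆ =
        - p y ⁅coadg x ξ, η⁆ - p y ⁅ξ, coadg x η⁆
        + p x ⁅coadg y ξ, η⁆ + p x ⁅ξ, coadg y η⁆)
    -- dual bases of `g` and `gs`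
    (n : ℕ) (bg : Module.Basis (Fin n) ℝ g) (bgs : Module.Basis (Fin n) ℝ gs)
    (hdual : ∀ i j, p (bg i) (bgs j) = if i = j then (1:ℝ) else 0) :
    -- the adjoint operator of the double bracket, `Dop u = [u, ·]_d`
    let fstm := LinearMap.fst ℝ g gs
    let sndm := LinearMap.snd ℝ g gs
    let Dop : g × gs → ((g × gs) →ₗ[ℝ] (g × gs)) := fun u =>
      (((LieAlgebra.ad ℝ g u.1 : g →ₗ[ℝ] g) ∘ₗ fstm) + ((coadgs u.2) ∘ₗ fstm)
          - ((coadgs.flip u.1) ∘ₗ sndm)).prod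
        (((LieAlgebra.ad ℝ gs u.2 : gs →ₗ[ℝ] gs) ∘ₗ sndm) + ((coadg u.1) ∘ₗ sndm)
          - ((coadg.flip u.2) ∘ₗ fstm))
    ∀ (hsub : Submodule ℝ g) (l : Submodule ℝ (g × gs)) (L : gs →ₗ[ℝ] g),
      -- `h⁰`, the annihilator of `h` in `gs`
      let h0 : Submodule ℝ gs := ⨅ x ∈ hsub, LinearMap.ker (p x)
      -- `T_ξ : η ↦ [ξ,η]_Λ = [ξ,η] + ad*_{Λξ}η − ad*_{Λη}ξ`
      let TLam : gs → (gs →ₗ[ℝ] gs) := fun ξ =>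
        (LieAlgebra.ad ℝ gs ξ : gs →ₗ[ℝ] gs) + coadg (L ξ) - (coadg ∘ₗ L).flip ξ
      -- `bΛ`, computed from `Λ = ½ Σ x_i ∧ (Λξ_i)`
      let bLam : g := (2:ℝ)⁻¹ • ∑ i : Fin n, ⁅bg i, L (bgs i)⁆
      -- `Λ` skew
      (∀ ξ η : gs, p (L ξ) η = - p (L η) ξ) →
      -- `l` Lagrangian
      (∀ u ∈ l, ∀ v ∈ l, p v.1 u.2 + p u.1 v.2 = 0) →
      Module.finrank ℝ l = Module.finrank ℝ g →
      -- `h = l ∩ g`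
      (∀ x : g, x ∈ hsub ↔ ((x, 0) : g × gs) ∈ l) →
      -- `l = {x + Λξ + ξ : x ∈ h, ξ ∈ h⁰}`
      ((l : Set (g × gs)) = {u | ∃ x ∈ hsub, ∃ ξ ∈ h0, u = (x + L ξ, ξ)}) →
      ∀ (hsubalg : ∀ u ∈ l, ∀ v ∈ l, Dop u v ∈ l)
        (hmem : ∀ ξ ∈ h0, ((L ξ, ξ) : g × gs) ∈ l)
        (hTpres : ∀ ξ ∈ h0, ∀ η ∈ h0, TLam ξ η ∈ h0),
      ∀ (ξ : gs) (hξ : ξ ∈ h0),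
        LinearMap.trace ℝ h0 ((TLam ξ).restrict (hTpres ξ hξ)) + p bLam ξ
          = (1/2 : ℝ) *
            (LinearMap.trace ℝ l ((Dop (L ξ, ξ)).restrict (hsubalg (L ξ, ξ) (hmem ξ hξ)))
              - LinearMap.trace ℝ g (LieAlgebra.ad ℝ g (L ξ) : g →ₗ[ℝ] g)
              + LinearMap.trace ℝ gs (LieAlgebra.ad ℝ gs ξ : gs →ₗ[ℝ] gs)) := by
  intro fstm sndm Dop hsub l L h0 TLam bLam hLskew hlag hdim hcap hset hsubalg hmem hTpres ξ hξ
  -- unfolding lemmas for the `let`s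
  have hDop1 : ∀ (u v : g × gs),
      (Dop u v).1 = ⁅u.1, v.1⁆ + coadgs u.2 v.1 - coadgs v.2 u.1 := fun u v => rfl
  have hDop2 : ∀ (u v : g × gs),
      (Dop u v).2 = ⁅u.2, v.2⁆ + coadg u.1 v.2 - coadg v.1 u.2 := fun u v => rfl
  have hTapp : ∀ (ζ η : gs), TLam ζ η = ⁅ζ, η⁆ + coadg (L ζ) η - coadg (L η) ζ :=
    fun ζ η => rfl
  -- membership in h0
  have hh0 : ∀ η : gs, η ∈ h0 ↔ ∀ x ∈ hsub, p x η = 0 := by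
    intro η
    show η ∈ (⨅ x ∈ hsub, LinearMap.ker (p x)) ↔ _
    simp [Submodule.mem_iInf, LinearMap.mem_ker]
  -- expansions
  have hexp_g : ∀ x : g, x = ∑ i, p x (bgs i) • bg i := by
    intro x
    conv_lhs => rw [← bg.sum_repr x]
    exact Finset.sum_congr rfl fun i _ => by rw [coord_eq_pair p bg bgs hdual]
  -- the projection onto hsub
  obtain ⟨c, hc⟩ := Submodule.exists_isCompl hsub
  set Ph : g →ₗ[ℝ] g := hsub.subtype ∘ₗ Submodule.linearProjOfIsCompl hsub c hc with hPh_def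
  have hPh_mem : ∀ x, Ph x ∈ hsub := fun x => SetLike.coe_mem _
  have hPh_id : ∀ x ∈ hsub, Ph x = x := by
    intro x hx
    have h1 : Submodule.linearProjOfIsCompl hsub c hc x = ⟨x, hx⟩ := by
      conv_lhs => rw [show x = ((⟨x, hx⟩ : hsub) : g) from rfl]
      exact Submodule.linearProjOfIsCompl_apply_left hc _
    show (↑(Submodule.linearProjOfIsCompl hsub c hc x) : g) = x
    rw [h1]
  -- its transpose
  set Pt : gs →ₗ[ℝ] gs := ∑ i, LinearMap.smulRight (p (Ph (bg i))) (bgs i) with hPt_def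
  have hPt : ∀ (x : g) (η : gs), p x (Pt η) = p (Ph x) η := by
    intro x η
    have h1 : p x (Pt η) = ∑ i, p (Ph (bg i)) η * p x (bgs i) := by
      rw [hPt_def, LinearMap.sum_apply, map_sum]
      exact Finset.sum_congr rfl fun i _ => by
        rw [LinearMap.smulRight_apply, map_smul, smul_eq_mul]
    have h2 : p (Ph x) η = ∑ i, p x (bgs i) * p (Ph (bg i)) η := by
      conv_lhs => rw [hexp_g x, map_sum, map_sum, LinearMap.sum_apply]
      exact Finset.sum_congr rfl fun i _ => by
        rw [map_smul, map_smul, LinearMap.smul_apply, smul_eq_mul]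
    rw [h1, h2]
    exact Finset.sum_congr rfl fun i _ => by ring
  set Q : gs →ₗ[ℝ] gs := LinearMap.id - Pt with hQ_def
  have hQpair : ∀ (x : g) (η : gs), p x (Q η) = p x η - p (Ph x) η := by
    intro x η
    rw [hQ_def]
    simp only [LinearMap.sub_apply, LinearMap.id_apply, map_sub, hPt]
  have hQmem : ∀ η : gs, Q η ∈ h0 := by
    intro η
    rw [hh0]
    intro x hx
    rw [hQpair, hPh_id x hx, sub_self]
  have hQid : ∀ η ∈ h0, Q η = η := by
    intro η hη
    have hPt0 : Pt η = 0 := by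
      apply hp2
      intro x
      rw [hPt]
      exact (hh0 η).1 hη _ (hPh_mem x)
    rw [hQ_def]
    simp [hPt0]
  -- coadjoint action of h on ξ lands in h0
  have hsecond : ∀ u ∈ l, (u.2 : gs) ∈ h0 := by
    intro u hu
    have h1 : u ∈ (l : Set (g × gs)) := hu
    rw [hset] at h1
    obtain ⟨x', hx', ξ', hξ', rfl⟩ := h1
    exact hξ'
  have hcoadg_h0 : ∀ x ∈ hsub, coadg x ξ ∈ h0 := by
    intro x hx
    have hxl : ((x, 0) : g × gs) ∈ l := (hcap x).1 hx
    have hDl := hsubalg (L ξ, ξ) (hmem ξ hξ) (x, 0) hxl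
    have h2 : (Dop (L ξ, ξ) (x, 0)).2 = - coadg x ξ := by
      rw [hDop2]; simp
    have h3 := hsecond _ hDl
    rw [h2] at h3
    simpa using h0.neg_mem h3
  -- the projection onto l
  set Pl : (g × gs) →ₗ[ℝ] (g × gs) :=
    LinearMap.prod ((Ph ∘ₗ (fstm - L ∘ₗ Q ∘ₗ sndm)) + (L ∘ₗ Q ∘ₗ sndm)) (Q ∘ₗ sndm)
    with hPl_def
  have hPl_apply : ∀ v : g × gs,
      Pl v = (Ph (v.1 - L (Q v.2)) + L (Q v.2), Q v.2) := fun v => rfl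
  have hPl_mem : ∀ v, Pl v ∈ l := by
    intro v
    have h1 : Pl v ∈ (l : Set (g × gs)) := by
      rw [hset]
      exact ⟨Ph (v.1 - L (Q v.2)), hPh_mem _, Q v.2, hQmem _, by rw [hPl_apply]⟩
    exact h1
  have hPl_id : ∀ v ∈ l, Pl v = v := by
    intro v hv
    have h1 : v ∈ (l : Set (g × gs)) := hv
    rw [hset] at h1
    obtain ⟨x, hx, η, hη, rfl⟩ := h1
    rw [hPl_apply]
    have h2 : Q η = η := hQid η hη
    simp only [h2]
    have h3 : x + L η - L η = x := by abel
    rw [h3, hPh_id x hx]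
  -- traces as sums
  have htr1 : LinearMap.trace ℝ h0 ((TLam ξ).restrict (hTpres ξ hξ))
      = ∑ i, p (bg i) (TLam ξ (Q (bgs i))) := by
    rw [trace_restrict_eq_trace_comp h0 (TLam ξ) (hTpres ξ hξ) Q hQmem hQid,
      trace_eq_sum_gs p bg bgs hdual]
    rfl
  have htr2 : LinearMap.trace ℝ l ((Dop (L ξ, ξ)).restrict (hsubalg (L ξ, ξ) (hmem ξ hξ)))
      = (∑ i, p ((Dop (L ξ, ξ) (Pl (bg i, 0))).1) (bgs i))
        + ∑ i, p (bg i) ((Dop (L ξ, ξ) (Pl (0, bgs i))).2) := by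
    rw [trace_restrict_eq_trace_comp l (Dop (L ξ, ξ)) (hsubalg (L ξ, ξ) (hmem ξ hξ))
      Pl hPl_mem hPl_id, trace_prod_decomp, trace_eq_sum_g p bg bgs hdual,
      trace_eq_sum_gs p bg bgs hdual]
    rfl
  have htrg : LinearMap.trace ℝ g (LieAlgebra.ad ℝ g (L ξ) : g →ₗ[ℝ] g)
      = ∑ i, p ⁅L ξ, bg i⁆ (bgs i) := by
    rw [trace_eq_sum_g p bg bgs hdual]; rfl
  have htrgs : LinearMap.trace ℝ gs (LieAlgebra.ad ℝ gs ξ : gs →ₗ[ℝ] gs)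
      = ∑ i, p (bg i) ⁅ξ, bgs i⁆ := by
    rw [trace_eq_sum_gs p bg bgs hdual]; rfl
  have hbl : p bLam ξ = (2:ℝ)⁻¹ * ∑ i, p ⁅bg i, L (bgs i)⁆ ξ := by
    show p ((2:ℝ)⁻¹ • ∑ i : Fin n, ⁅bg i, L (bgs i)⁆) ξ = _
    rw [map_smul, LinearMap.smul_apply, map_sum, LinearMap.sum_apply, smul_eq_mul]
  -- images of basis vectors under Pl
  have hPl1 : ∀ i, Pl ((bg i, 0) : g × gs) = (Ph (bg i), 0) := by
    intro i
    rw [hPl_apply]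
    simp
  have hPl2 : ∀ i, Pl ((0, bgs i) : g × gs)
      = (L (Q (bgs i)) - Ph (L (Q (bgs i))), Q (bgs i)) := by
    intro i
    rw [hPl_apply]
    congr 1
    rw [zero_sub, map_neg]
    abel
  -- first block sum, termwise
  have hS1 : ∀ i, p ((Dop (L ξ, ξ) (Pl ((bg i, 0) : g × gs))).1) (bgs i)
      = p ⁅L ξ, bg i⁆ (bgs i) + p (bg i) (Q (coadg (L ξ) (bgs i)))
        - p (bg i) ⁅ξ, bgs i⁆ + p (bg i) (Q ⁅ξ, bgs i⁆) := by
    intro i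
    rw [hPl1, hDop1]
    have a0 : (⁅(L ξ, ξ).1, (Ph (bg i), (0:gs)).1⁆ + coadgs (L ξ, ξ).2 (Ph (bg i), (0:gs)).1
        - coadgs (Ph (bg i), (0:gs)).2 (L ξ, ξ).1)
        = ⁅L ξ, Ph (bg i)⁆ + coadgs ξ (Ph (bg i)) := by
      simp
    rw [a0, map_add, LinearMap.add_apply]
    have a1 : p ⁅L ξ, Ph (bg i)⁆ (bgs i) = - p (Ph (bg i)) (coadg (L ξ) (bgs i)) := by
      have h : (⁅L ξ, Ph (bg i)⁆ : g) = -⁅Ph (bg i), L ξ⁆ := (lie_skew _ _).symm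
      rw [h, map_neg, LinearMap.neg_apply, hcoadg]
    have a2 : ∀ (x : g) (η : gs), p (Ph x) η = p x η - p x (Q η) := by
      intro x η; rw [hQpair]; ring
    have a3 : p (bg i) (coadg (L ξ) (bgs i)) = - p ⁅L ξ, bg i⁆ (bgs i) := by
      rw [hcoadg]
      have h : (⁅bg i, L ξ⁆ : g) = -⁅L ξ, bg i⁆ := (lie_skew _ _).symm
      rw [h, map_neg, LinearMap.neg_apply]
    have a4 : p (coadgs ξ (Ph (bg i))) (bgs i) = p (Ph (bg i)) ⁅bgs i, ξ⁆ := hcoadgs _ _ _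
    have a5 : p (bg i) ⁅bgs i, ξ⁆ = - p (bg i) ⁅ξ, bgs i⁆ := by
      have h : (⁅bgs i, ξ⁆ : gs) = -⁅ξ, bgs i⁆ := (lie_skew _ _).symm
      rw [h, map_neg]
    have a6 : p (bg i) (Q ⁅bgs i, ξ⁆) = - p (bg i) (Q ⁅ξ, bgs i⁆) := by
      have h : (⁅bgs i, ξ⁆ : gs) = -⁅ξ, bgs i⁆ := (lie_skew _ _).symm
      rw [h, map_neg, map_neg]
    have b1 := a2 (bg i) (coadg (L ξ) (bgs i))
    have b2 := a2 (bg i) (⁅bgs i, ξ⁆ : gs)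
    linarith [a1, a3, a4, a5, a6, b1, b2]
  -- second block sum, termwise
  have hS2 : ∀ i, p (bg i) ((Dop (L ξ, ξ) (Pl ((0, bgs i) : g × gs))).2)
      = p (bg i) (TLam ξ (Q (bgs i))) + p (bg i) (coadg (Ph (L (Q (bgs i)))) ξ) := by
    intro i
    rw [hPl2, hDop2, hTapp]
    simp only [map_sub, map_add, LinearMap.sub_apply, LinearMap.add_apply]
    ring
  -- cyclic swaps
  have hswap1 : ∑ i, p (bg i) (Q (coadg (L ξ) (bgs i)))
      = ∑ i, p (bg i) (coadg (L ξ) (Q (bgs i))) :=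
    sum_swap_ops p bg bgs hdual Q (coadg (L ξ))
  have hswap2 : ∑ i, p (bg i) (Q ⁅ξ, bgs i⁆) = ∑ i, p (bg i) ⁅ξ, Q (bgs i)⁆ := by
    have h := sum_swap_ops p bg bgs hdual Q (LieAlgebra.ad ℝ gs ξ)
    simpa [LieAlgebra.ad_apply] using h
  -- the W operator and its swap
  set W : gs →ₗ[ℝ] gs := coadg.flip ξ ∘ₗ (Ph ∘ₗ (L : gs →ₗ[ℝ] g)) with hW_def
  have hW_apply : ∀ η, W η = coadg (Ph (L η)) ξ := fun η => rfl
  have hW_mem : ∀ η, W η ∈ h0 := fun η => by rw [hW_apply]; exact hcoadg_h0 _ (hPh_mem _)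
  have hswap3 : ∑ i, p (bg i) (W (Q (bgs i))) = ∑ i, p (bg i) (W (bgs i)) := by
    rw [sum_swap_ops p bg bgs hdual W Q]
    exact Finset.sum_congr rfl fun i _ => by rw [hQid _ (hW_mem _)]
  -- symmetric-skew vanishing
  set Dm : gs →ₗ[ℝ] g := Ph ∘ₗ (L : gs →ₗ[ℝ] g) - L + L ∘ₗ Q with hDm_def
  have hDm_apply : ∀ η, Dm η = Ph (L η) - L η + L (Q η) := fun η => rfl
  have hDm_pair : ∀ (η μ : gs), p (Dm η) μ
      = p (Ph (L η)) μ - p (L η) μ + p (L (Q η)) μ := by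
    intro η μ
    calc p (Dm η) μ = p (Ph (L η) - L η + L (Q η)) μ := by rw [hDm_apply]
      _ = p (Ph (L η)) μ - p (L η) μ + p (L (Q η)) μ := by
          rw [map_add p (Ph (L η) - L η) (L (Q η)), map_sub p (Ph (L η)) (L η),
            LinearMap.add_apply, LinearMap.sub_apply]
  have hsymD : ∀ η μ : gs, p (Dm η) μ = p (Dm μ) η := by
    intro η μ
    rw [hDm_pair η μ, hDm_pair μ η]
    have e1 : p (Ph (L η)) μ = p (L η) μ - p (L η) (Q μ) := by rw [hQpair]; ring
    have e2 : p (Ph (L μ)) η = p (L μ) η - p (L μ) (Q η) := by rw [hQpair]; ring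
    have e3 : p (L (Q η)) μ = - p (L μ) (Q η) := hLskew _ _
    have e4 : p (L (Q μ)) η = - p (L η) (Q μ) := hLskew _ _
    have e5 : p (L η) μ = - p (L μ) η := hLskew _ _
    linarith
  have hzero : ∑ i, p ⁅bg i, Dm (bgs i)⁆ ξ = 0 := by
    have hterm : ∀ i, p ⁅bg i, Dm (bgs i)⁆ ξ
        = ∑ j, p (Dm (bgs i)) (bgs j) * p ⁅bg i, bg j⁆ ξ := by
      intro i
      have hφ : ∀ x : g, p ⁅bg i, x⁆ ξ
          = ((p.flip ξ) ∘ₗ ((LieAlgebra.ad ℝ g (bg i) : g →ₗ[ℝ] g))) x := fun x => rfl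
      rw [hφ]
      conv_lhs => rw [hexp_g (Dm (bgs i)), map_sum]
      exact Finset.sum_congr rfl fun j _ => by
        rw [map_smul, smul_eq_mul, hφ]
    simp only [hterm]
    exact sum_pair_vanish (fun i j => p (Dm (bgs i)) (bgs j))
      (fun i j => p ⁅bg i, bg j⁆ ξ)
      (fun i j => by
        show p (Dm (bgs i)) (bgs j) = p (Dm (bgs j)) (bgs i)
        exact hsymD _ _)
      (fun i j => by
        show p ⁅bg i, bg j⁆ ξ = - p ⁅bg j, bg i⁆ ξ
        have h : (⁅bg i, bg j⁆ : g) = -⁅bg j, bg i⁆ := (lie_skew _ _).symm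
        rw [h, map_neg, LinearMap.neg_apply])
  have hvan : ∑ i, p (bg i) (W (bgs i))
      = (∑ i, p (bg i) (coadg (L (bgs i)) ξ))
        - ∑ i, p (bg i) (coadg (L (Q (bgs i))) ξ) := by
    have hterm : ∀ i, p ⁅bg i, Dm (bgs i)⁆ ξ
        = p (bg i) (W (bgs i)) - p (bg i) (coadg (L (bgs i)) ξ)
          + p (bg i) (coadg (L (Q (bgs i))) ξ) := by
      intro i
      rw [hDm_apply, hW_apply]
      rw [hcoadg, hcoadg, hcoadg]
      have h : (⁅bg i, Ph (L (bgs i)) - L (bgs i) + L (Q (bgs i))⁆ : g)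
          = ⁅bg i, Ph (L (bgs i))⁆ - ⁅bg i, L (bgs i)⁆ + ⁅bg i, L (Q (bgs i))⁆ := by
        rw [lie_add, lie_sub]
      rw [h, map_add, map_sub, LinearMap.add_apply, LinearMap.sub_apply]
    have h2 : ∑ i, (p (bg i) (W (bgs i)) - p (bg i) (coadg (L (bgs i)) ξ)
        + p (bg i) (coadg (L (Q (bgs i))) ξ)) = 0 := by
      rw [← Finset.sum_congr rfl fun i _ => hterm i]
      exact hzero
    rw [Finset.sum_add_distrib, Finset.sum_sub_distrib] at h2
    linarith
  -- apply termwise identity for TLam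
  have hTsum : ∑ i, p (bg i) (TLam ξ (Q (bgs i)))
      = ∑ i, p (bg i) ⁅ξ, Q (bgs i)⁆ + ∑ i, p (bg i) (coadg (L ξ) (Q (bgs i)))
        - ∑ i, p (bg i) (coadg (L (Q (bgs i))) ξ) := by
    rw [← Finset.sum_add_distrib, ← Finset.sum_sub_distrib]
    refine Finset.sum_congr rfl fun i _ => ?_
    rw [hTapp]
    simp only [map_add, map_sub, LinearMap.add_apply, LinearMap.sub_apply]
  have hWQsum : ∑ i, p (bg i) (coadg (Ph (L (Q (bgs i)))) ξ)
      = ∑ i, p (bg i) (W (Q (bgs i))) :=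
    Finset.sum_congr rfl fun i _ => by rw [hW_apply]
  have hfin : ∑ i, p (bg i) (coadg (L (bgs i)) ξ) = ∑ i, p ⁅bg i, L (bgs i)⁆ ξ :=
    Finset.sum_congr rfl fun i _ => hcoadg _ _ _
  -- assemble everything
  rw [htr1, htr2, htrg, htrgs, hbl]
  have hS1sum : ∑ i, p ((Dop (L ξ, ξ) (Pl ((bg i, 0) : g × gs))).1) (bgs i)
      = ∑ i, p ⁅L ξ, bg i⁆ (bgs i) + ∑ i, p (bg i) (Q (coadg (L ξ) (bgs i)))
        - ∑ i, p (bg i) ⁅ξ, bgs i⁆ + ∑ i, p (bg i) (Q ⁅ξ, bgs i⁆) := by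
    rw [← Finset.sum_add_distrib, ← Finset.sum_sub_distrib, ← Finset.sum_add_distrib]
    exact Finset.sum_congr rfl fun i _ => hS1 i
  have hS2sum : ∑ i, p (bg i) ((Dop (L ξ, ξ) (Pl ((0, bgs i) : g × gs))).2)
      = ∑ i, p (bg i) (TLam ξ (Q (bgs i)))
        + ∑ i, p (bg i) (coadg (Ph (L (Q (bgs i)))) ξ) := by
    rw [← Finset.sum_add_distrib]
    exact Finset.sum_congr rfl fun i _ => hS2 i
  rw [hS1sum, hS2sum]
  linarith [hswap1, hswap2, hswap3, hvan, hTsum, hWQsum, hfin]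
end

section
/- Let (g, δ) be a Lie bialgebra with double d = g ⊕ g*, and Λ ∈ ∧²g. Set g′ = {Λξ + ξ : ξ ∈ g*} ⊆ d. Then g′ is a Lagrangian subspace of d (with respect to ⟨x+ξ, y+η⟩ = ξ(y)+η(x)) complementary to g, and the element φ ∈ ∧³g defined by φ(ξ∧η∧ζ) = ⟨p₁[Λξ+ξ, Λη+η], Λζ+ζ⟩, where p₁: d → g is the projection along g′, equals ½[Λ,Λ] + δ(Λ), where [·,·] is the Schouten bracket on ∧g and δ is extended as a derivation. -/
/-- Let `(g, δ)` be a Lie bialgebra with double `d = g ⊕ g*` and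
`Λ ∈ ∧²g` (encoded by the skew map `L ξ = Λξ = ι_ξΛ`).  Set
`g′ = {Λξ + ξ : ξ ∈ g*} ⊆ d`.  Then `g′` is a Lagrangian subspace of `d`
complementary to `g`, and the element `φ ∈ ∧³g` defined by
`φ(ξ∧η∧ζ) = ⟨p₁[Λξ+ξ, Λη+η], Λζ+ζ⟩` (with `p₁ : d → g` the projection along `g′`)
equals `½[Λ,Λ] + δ(Λ)`, i.e. is given on `ξ∧η∧ζ` by
`⟨[Λξ,Λη],ζ⟩ + ⟨[Λη,Λζ],ξ⟩ + ⟨[Λζ,Λξ],η⟩ + ⟨Λξ,[η,ζ]⟩ + ⟨Λη,[ζ,ξ]⟩ + ⟨Λζ,[ξ,η]⟩`. -/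
theorem twisted_manin_quasi_triple
    (g gs : Type) [LieRing g] [LieAlgebra ℝ g] [LieRing gs] [LieAlgebra ℝ gs]
    [FiniteDimensional ℝ g] [FiniteDimensional ℝ gs]
    (p : g →ₗ[ℝ] gs →ₗ[ℝ] ℝ)
    (hp1 : ∀ x : g, (∀ ξ : gs, p x ξ = 0) → x = 0)
    (hp2 : ∀ ξ : gs, (∀ x : g, p x ξ = 0) → ξ = 0)
    (coadg : g →ₗ[ℝ] gs →ₗ[ℝ] gs)
    (hcoadg : ∀ (x y : g) (ξ : gs), p y (coadg x ξ) = p ⁅y, x⁆ ξ)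
    (coadgs : gs →ₗ[ℝ] g →ₗ[ℝ] g)
    (hcoadgs : ∀ (ξ η : gs) (x : g), p (coadgs ξ x) η = p x ⁅η, ξ⁆)
    (hcocycle : ∀ (x y : g) (ξ η : gs),
      p ⁅x, y⁆ ⁅ξ, η⁆ =
        - p y ⁅coadg x ξ, η⁆ - p y ⁅ξ, coadg x η⁆
        + p x ⁅coadg y ξ, η⁆ + p x ⁅ξ, coadg y η⁆)
    (L : gs →ₗ[ℝ] g)
    (hLskew : ∀ ξ η : gs, p (L ξ) η = - p (L η) ξ) :
    -- the double bracket and pairing on `d = g × gs`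
    let Bd : g × gs → g × gs → g × gs := fun u v =>
      (⁅u.1, v.1⁆ + coadgs u.2 v.1 - coadgs v.2 u.1,
       ⁅u.2, v.2⁆ + coadg u.1 v.2 - coadg v.1 u.2)
    let pr : g × gs → g × gs → ℝ := fun u v => p v.1 u.2 + p u.1 v.2
    -- `g` and `g′ = {Λξ + ξ}` as subspaces of `d`, and the projection `p₁` along `g′`
    let gsub : Submodule ℝ (g × gs) := LinearMap.ker (LinearMap.snd ℝ g gs)
    let g'sub : Submodule ℝ (g × gs) := LinearMap.range (L.prod (LinearMap.id))
    let p1 : g × gs → g := fun u => u.1 - L u.2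
    -- `g′` is Lagrangian and complementary to `g`
    (∀ u ∈ g'sub, ∀ v ∈ g'sub, pr u v = 0) ∧
    Module.finrank ℝ g'sub = Module.finrank ℝ g ∧
    IsCompl gsub g'sub ∧
    -- `φ = ½[Λ,Λ] + δ(Λ)`
    (∀ ξ η ζ : gs,
      p (p1 (Bd (L ξ, ξ) (L η, η))) ζ
        = p ⁅L ξ, L η⁆ ζ + p ⁅L η, L ζ⁆ ξ + p ⁅L ζ, L ξ⁆ η
          + p (L ξ) ⁅η, ζ⁆ + p (L η) ⁅ζ, ξ⁆ + p (L ζ) ⁅ξ, η⁆) := by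
  intro Bd pr gsub g'sub p1
  -- dim g = dim gs from nondegeneracy
  have hdim : Module.finrank ℝ gs = Module.finrank ℝ g := by
    have h1 : Module.finrank ℝ g ≤ Module.finrank ℝ (gs →ₗ[ℝ] ℝ) :=
      LinearMap.finrank_le_finrank_of_injective (f := p) (by
        intro x y h
        have := hp1 (x - y) (fun ξ => by simp [map_sub, h, sub_eq_zero])
        exact sub_eq_zero.mp this)
    have h2 : Module.finrank ℝ gs ≤ Module.finrank ℝ (g →ₗ[ℝ] ℝ) :=
      LinearMap.finrank_le_finrank_of_injective (f := p.flip) (by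
        intro ξ η h
        have := hp2 (ξ - η) (fun x => by
          have : p.flip ξ x = p.flip η x := by rw [h]
          simp only [LinearMap.flip_apply] at this
          simp [map_sub, this])
        exact sub_eq_zero.mp this)
    have hd1 : Module.finrank ℝ (gs →ₗ[ℝ] ℝ) = Module.finrank ℝ gs :=
      Subspace.dual_finrank_eq
    have hd2 : Module.finrank ℝ (g →ₗ[ℝ] ℝ) = Module.finrank ℝ g :=
      Subspace.dual_finrank_eq
    omega
  have hLinj : Function.Injective (L.prod (LinearMap.id (R := ℝ) (M := gs))) := by
    intro ξ η h
    have := congrArg Prod.snd h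
    simpa using this
  refine ⟨?_, ?_, ?_, ?_⟩
  · rintro u ⟨ξ, rfl⟩ v ⟨η, rfl⟩
    simp only [pr, LinearMap.prod_apply, Function.prod, LinearMap.id_apply]
    have := hLskew ξ η
    have := hLskew η ξ
    linarith
  · rw [LinearMap.finrank_range_of_inj hLinj, hdim]
  · constructor
    · rw [Submodule.disjoint_def]
      rintro u hu ⟨ξ, rfl⟩
      simp only [gsub, LinearMap.mem_ker, LinearMap.snd_apply, LinearMap.prod_apply,
        Function.prod, LinearMap.id_apply] at hu ⊢
      subst hu
      simp
    · rw [codisjoint_iff, eq_top_iff]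
      rintro ⟨x, ξ⟩ -
      have h1 : ((x - L ξ, 0) : g × gs) ∈ gsub := by simp [gsub]
      have h2 : ((L ξ, ξ) : g × gs) ∈ g'sub := ⟨ξ, rfl⟩
      have : ((x, ξ) : g × gs) = (x - L ξ, 0) + (L ξ, ξ) := by
        ext <;> simp
      rw [this]
      exact Submodule.add_mem_sup h1 h2
  · intro ξ η ζ
    simp only [p1, Bd]
    have e1 := hcoadgs ξ ζ (L η)
    have e2 := hcoadgs η ζ (L ξ)
    have e3 := hLskew (⁅ξ, η⁆) ζ
    have e4 := hLskew (coadg (L ξ) η) ζ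
    have e5 := hLskew (coadg (L η) ξ) ζ
    have e6 := hcoadg (L ξ) (L ζ) η
    have e7 := hcoadg (L η) (L ζ) ξ
    have s1 : p ⁅L ζ, L η⁆ ξ = - p ⁅L η, L ζ⁆ ξ := by
      rw [← lie_skew (L η) (L ζ), map_neg]; simp
    have s2 : p (L ξ) ⁅ζ, η⁆ = - p (L ξ) ⁅η, ζ⁆ := by
      simp only [(lie_skew η ζ).symm, map_neg, neg_neg]
    simp only [map_add, map_sub, LinearMap.add_apply, LinearMap.sub_apply]
    linarith
end

section
/- Let {x_i} be a basis of g with dual basis {ξ_i} of g*, Λ ∈ ∧²g, and let p′: d → g′ and p₁: d → g be the projections with respect to d = g ⊕ g′ where g′ = {Λξ+ξ}. Then Σ_{i,j} p′[Λξ_i+ξ_i, Λξ_j+ξ_j] ⊗ (x_i ∧ x_j) = 2 Σ_i (Λξ_i+ξ_i) ⊗ ([x_i, Λ] + δ(x_i)) in g′ ⊗ ∧²g, where the bracket is the Drinfeld double bracket, [x_i, Λ] denotes the adjoint action of x_i on ∧²g, and δ is the cobracket. -/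
open TensorProduct

private lemma lie_swap' {g : Type} [LieRing g] (a b : g) : ⁅b, a⁆ = -⁅a, b⁆ := by
  rw [← lie_skew a b, neg_neg]

/-- Let `{x_i}` be a basis of `g` with dual basis `{ξ_i}` of `g*`,
`Λ ∈ ∧²g` (encoded by the skew map `L ξ = Λξ`), and let `p′ : d → g′` and `p₁ : d → g`
be the projections with respect to `d = g ⊕ g′`, `g′ = {Λξ+ξ}`.  Then
`Σ_{i,j} p′[Λξ_i+ξ_i, Λξ_j+ξ_j] ⊗ (x_i ∧ x_j) = 2 Σ_i (Λξ_i+ξ_i) ⊗ ([x_i,Λ] + δ(x_i))`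
in `g′ ⊗ ∧²g`, where the bracket is the Drinfeld double bracket, `[x_i,Λ]` is the
adjoint action of `x_i` on `∧²g`, and `δ` is the cobracket.  (Bivectors in `∧²g` are
encoded as the corresponding skew contraction maps `g* → g`.) -/
theorem quasi_triple_tensor_identity
    (g gs : Type) [LieRing g] [LieAlgebra ℝ g] [LieRing gs] [LieAlgebra ℝ gs]
    [FiniteDimensional ℝ g] [FiniteDimensional ℝ gs]
    (p : g →ₗ[ℝ] gs →ₗ[ℝ] ℝ)
    (hp1 : ∀ x : g, (∀ ξ : gs, p x ξ = 0) → x = 0)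
    (hp2 : ∀ ξ : gs, (∀ x : g, p x ξ = 0) → ξ = 0)
    (coadg : g →ₗ[ℝ] gs →ₗ[ℝ] gs)
    (hcoadg : ∀ (x y : g) (ξ : gs), p y (coadg x ξ) = p ⁅y, x⁆ ξ)
    (coadgs : gs →ₗ[ℝ] g →ₗ[ℝ] g)
    (hcoadgs : ∀ (ξ η : gs) (x : g), p (coadgs ξ x) η = p x ⁅η, ξ⁆)
    (hcocycle : ∀ (x y : g) (ξ η : gs),
      p ⁅x, y⁆ ⁅ξ, η⁆ =
        - p y ⁅coadg x ξ, η⁆ - p y ⁅ξ, coadg x η⁆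
        + p x ⁅coadg y ξ, η⁆ + p x ⁅ξ, coadg y η⁆)
    -- dual bases `{x_i}` of `g` and `{ξ_i}` of `g*`
    (n : ℕ) (bg : Module.Basis (Fin n) ℝ g) (bgs : Module.Basis (Fin n) ℝ gs)
    (hdual : ∀ i j, p (bg i) (bgs j) = if i = j then (1:ℝ) else 0)
    (L : gs →ₗ[ℝ] g)
    (hLskew : ∀ ξ η : gs, p (L ξ) η = - p (L η) ξ) :
    -- the double bracket, the projection `p′ : d → g′` along `g`,
    -- `x_i ∧ x_j ∈ ∧²g`, the adjoint action `[x,Λ]`, and the cobracket `δ(x)`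
    let Bd : g × gs → g × gs → g × gs := fun u v =>
      (⁅u.1, v.1⁆ + coadgs u.2 v.1 - coadgs v.2 u.1,
       ⁅u.2, v.2⁆ + coadg u.1 v.2 - coadg v.1 u.2)
    let pdash : g × gs → g × gs := fun u => (L u.2, u.2)
    let wedge2 : g → g → (gs →ₗ[ℝ] g) := fun a c =>
      (p a).smulRight c - (p c).smulRight a
    let adLam : g → (gs →ₗ[ℝ] g) := fun x =>
      ((LieAlgebra.ad ℝ g x : g →ₗ[ℝ] g) ∘ₗ L) - (L ∘ₗ coadg x)
    let deltaMap : g → (gs →ₗ[ℝ] g) := fun x =>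
      ∑ i : Fin n, ((p x) ∘ₗ (- (LieAlgebra.ad ℝ gs (bgs i) : gs →ₗ[ℝ] gs))).smulRight (bg i)
    -- the identity in `g′ ⊗ ∧²g`
    (∑ i : Fin n, ∑ j : Fin n,
        (pdash (Bd (L (bgs i), bgs i) (L (bgs j), bgs j))) ⊗ₜ[ℝ] (wedge2 (bg i) (bg j)))
      = (2:ℝ) • ∑ i : Fin n,
          (((L (bgs i), bgs i) : g × gs) ⊗ₜ[ℝ] (adLam (bg i) + deltaMap (bg i))) := by
  intro Bd pdash wedge2 adLam deltaMap
  classical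
  -- the gs-component of the double bracket of two elements of g′
  set s : Fin n → Fin n → gs := fun i j =>
    ⁅bgs i, bgs j⁆ + coadg (L (bgs i)) (bgs j) - coadg (L (bgs j)) (bgs i) with hs
  have hterm : ∀ i j, pdash (Bd (L (bgs i), bgs i) (L (bgs j), bgs j))
      = ((L (s i j), s i j) : g × gs) := fun i j => rfl
  -- expansion of elements of gs in the basis bgs via the pairing
  have hexp : ∀ η : gs, η = ∑ k : Fin n, p (bg k) η • bgs k := by
    have hid : (LinearMap.id : gs →ₗ[ℝ] gs)
        = ∑ k : Fin n, (p (bg k)).smulRight (bgs k) := by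
      apply bgs.ext
      intro j
      simp [hdual, ite_smul, Finset.sum_ite_eq]
    intro η
    have h := congrArg (fun f : gs →ₗ[ℝ] gs => f η) hid
    simpa using h
  -- equality test in g
  have hgext : ∀ a b : g, (∀ m, p a (bgs m) = p b (bgs m)) → a = b := by
    intro a b h
    have h0 : ∀ ξ : gs, p (a - b) ξ = 0 := by
      intro ξ
      rw [hexp ξ]
      simp [h]
    exact sub_eq_zero.mp (hp1 (a - b) h0)
  -- the embedding gs → g × gs, ξ ↦ (Lξ, ξ)
  have hPhi : ∀ η : gs, ((L η, η) : g × gs)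
      = ∑ k : Fin n, p (bg k) η • ((L (bgs k), bgs k) : g × gs) := by
    intro η
    calc ((L η, η) : g × gs)
        = (L.prod LinearMap.id) (∑ k : Fin n, p (bg k) η • bgs k) := by
          rw [← hexp η]; rfl
      _ = ∑ k : Fin n, p (bg k) η • (L.prod LinearMap.id) (bgs k) := by
          rw [map_sum]; simp
      _ = _ := rfl
  -- rewrite the LHS as ∑ k, Φ(ξ_k) ⊗ T_k
  have lhs_eq : (∑ i : Fin n, ∑ j : Fin n,
        (pdash (Bd (L (bgs i), bgs i) (L (bgs j), bgs j))) ⊗ₜ[ℝ] (wedge2 (bg i) (bg j)))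
      = ∑ k : Fin n, ((L (bgs k), bgs k) : g × gs) ⊗ₜ[ℝ]
          (∑ i : Fin n, ∑ j : Fin n, p (bg k) (s i j) • wedge2 (bg i) (bg j)) := by
    calc (∑ i : Fin n, ∑ j : Fin n,
        (pdash (Bd (L (bgs i), bgs i) (L (bgs j), bgs j))) ⊗ₜ[ℝ] (wedge2 (bg i) (bg j)))
        = ∑ i : Fin n, ∑ j : Fin n, ∑ k : Fin n,
            ((L (bgs k), bgs k) : g × gs) ⊗ₜ[ℝ] (p (bg k) (s i j) • wedge2 (bg i) (bg j)) := by
          refine Finset.sum_congr rfl fun i _ => Finset.sum_congr rfl fun j _ => ?_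
          rw [hterm i j, hPhi (s i j), sum_tmul]
          exact Finset.sum_congr rfl fun k _ => by rw [smul_tmul]
      _ = ∑ i : Fin n, ∑ k : Fin n, ∑ j : Fin n,
            ((L (bgs k), bgs k) : g × gs) ⊗ₜ[ℝ] (p (bg k) (s i j) • wedge2 (bg i) (bg j)) :=
          Finset.sum_congr rfl fun i _ => Finset.sum_comm
      _ = ∑ k : Fin n, ∑ i : Fin n, ∑ j : Fin n,
            ((L (bgs k), bgs k) : g × gs) ⊗ₜ[ℝ] (p (bg k) (s i j) • wedge2 (bg i) (bg j)) :=
          Finset.sum_comm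
      _ = _ := by
          refine Finset.sum_congr rfl fun k _ => ?_
          rw [tmul_sum]
          exact Finset.sum_congr rfl fun i _ => (tmul_sum _ _ _).symm
  rw [lhs_eq, Finset.smul_sum]
  refine Finset.sum_congr rfl fun k _ => ?_
  rw [← tmul_smul]
  congr 1
  -- key: equality of the skew maps, tested on the dual bases
  refine Module.Basis.ext bgs fun l => ?_
  refine hgext _ _ fun m => ?_
  have hkey : ∀ l m : Fin n, p (bg k) (s l m)
      = p (bg k) ⁅bgs l, bgs m⁆ + p ⁅bg k, L (bgs l)⁆ (bgs m) - p ⁅bg k, L (bgs m)⁆ (bgs l) := by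
    intro l m
    simp [hs, hcoadg]
  have hanti : ∀ l m : Fin n, s m l = - s l m := by
    intro l m
    simp only [hs]
    rw [lie_swap' (bgs l) (bgs m)]
    abel
  have hL1 : p ((∑ i : Fin n, ∑ j : Fin n, p (bg k) (s i j) • wedge2 (bg i) (bg j)) (bgs l)) (bgs m)
      = p (bg k) (s l m) - p (bg k) (s m l) := by
    simp [wedge2, hdual, LinearMap.sum_apply, Finset.sum_sub_distrib, mul_ite, ite_mul,
      mul_one, mul_zero, one_mul, zero_mul, Finset.sum_ite_eq, Finset.sum_ite_eq',
      sub_mul, mul_sub, smul_eq_mul, apply_ite (fun z : g => p z (bgs m)), map_zero,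
      LinearMap.zero_apply]
  have hR : p (((2:ℝ) • (adLam (bg k) + deltaMap (bg k))) (bgs l)) (bgs m)
      = 2 * (p ⁅bg k, L (bgs l)⁆ (bgs m) - p (L (coadg (bg k) (bgs l))) (bgs m)
             - p (bg k) ⁅bgs m, bgs l⁆) := by
    simp [adLam, deltaMap, LieAlgebra.ad_apply, hdual, LinearMap.sum_apply, mul_ite, ite_mul,
      mul_one, mul_zero, Finset.sum_ite_eq, Finset.sum_ite_eq', smul_eq_mul, mul_sub, mul_add,
      apply_ite (fun z : g => p z (bgs m)), map_zero, LinearMap.zero_apply]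
    ring
  have e1 : p (L (coadg (bg k) (bgs l))) (bgs m) = p ⁅bg k, L (bgs m)⁆ (bgs l) := by
    rw [hLskew, hcoadg, lie_swap' (bg k) (L (bgs m)),
      map_neg, LinearMap.neg_apply, neg_neg]
  have e2 : p (bg k) ⁅bgs m, bgs l⁆ = - p (bg k) ⁅bgs l, bgs m⁆ := by
    rw [lie_swap' (bgs l) (bgs m), map_neg]
  rw [hL1, hR, hanti l m, map_neg, hkey l m, e1, e2]
  ring
end

section
/- Let (G, π_G) be a Poisson Lie group, H ⊆ G a closed subgroup with Lie algebra h, and Λ ∈ ∧²g with Ad_h Λ − Λ + (r_{h⁻¹})_* π_G(h) ∈ h ∧ g for all h ∈ H. Then for every ξ ∈ h⁰ = {ξ ∈ g* : ξ|_h = 0} and h ∈ H: Ad_h(Λξ) + p_g(Ad_h ξ) − Λ(Ad*_{h⁻¹} ξ) ∈ h, where Ad_h on g* ⊂ d is via the double action and p_g: d → g is the projection along g*. -/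
/-- Let `(G, π_G)` be a Poisson Lie group, `H ⊆ G` a closed subgroup
with Lie algebra `h`, and `Λ ∈ ∧²g` (encoded by the skew map `L ξ = Λξ`) with
`Ad_a Λ − Λ + (r_{a⁻¹})_* π_G(a) ∈ h ∧ g` for all `a ∈ H`.  Then for every
`ξ ∈ h⁰ = {ξ ∈ g* : ξ|_h = 0}` and `a ∈ H`:
`Ad_a(Λξ) + p_g(Ad_a ξ) − Λ(Ad*_{a⁻¹} ξ) ∈ h`, where `Ad_a` on `g* ⊂ d` is the
action on the double, `Ad_a ξ = ι_{Ad*_{a⁻¹}ξ}((r_{a⁻¹})_*π_G(a)) + Ad*_{a⁻¹}ξ`,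
whose `g`-component is `W_a(Ad*_{a⁻¹}ξ)` with `W_a = (r_{a⁻¹})_*π_G(a) ∈ ∧²g`,
and `p_g : d → g` is the projection along `g*`.  Here the adjoint action `A = Ad` of
`H` on `g`, the coadjoint action `Astar a = Ad*_{a⁻¹}`, and the bivectors `W_a` are
the data; `h ∧ g` membership of a bivector `B` is expressed by `ι_ξ B ∈ h` for all
`ξ ∈ h⁰`. -/
theorem Ad_invariance_of_Lambda_on_h0
    (g gs H : Type) [AddCommGroup g] [Module ℝ g] [AddCommGroup gs] [Module ℝ gs]
    [FiniteDimensional ℝ g] [FiniteDimensional ℝ gs] [Group H]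
    (p : g →ₗ[ℝ] gs →ₗ[ℝ] ℝ)
    (hp1 : ∀ x : g, (∀ ξ : gs, p x ξ = 0) → x = 0)
    (hp2 : ∀ ξ : gs, (∀ x : g, p x ξ = 0) → ξ = 0)
    -- the subalgebra `h` of `g`, preserved by the adjoint action of `H`
    (hsub : Submodule ℝ g)
    (A : H →* (g ≃ₗ[ℝ] g))
    (hAh : ∀ (a : H), ∀ x ∈ hsub, A a x ∈ hsub)
    -- the coadjoint action: `Astar a ξ = Ad*_{a⁻¹} ξ`, `⟨x, Ad*_{a⁻¹}ξ⟩ = ⟨Ad_{a⁻¹}x, ξ⟩`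
    (Astar : H → (gs →ₗ[ℝ] gs))
    (hAstar : ∀ (a : H) (x : g) (ξ : gs), p x (Astar a ξ) = p (A a⁻¹ x) ξ)
    -- `W a = (r_{a⁻¹})_* π_G(a) ∈ ∧²g`, skew
    (W : H → (gs →ₗ[ℝ] g))
    (hWskew : ∀ (a : H) (ξ η : gs), p (W a ξ) η = - p (W a η) ξ)
    -- `Λ`, skew
    (L : gs →ₗ[ℝ] g)
    (hLskew : ∀ ξ η : gs, p (L ξ) η = - p (L η) ξ)
    -- hypothesis: `Ad_a Λ − Λ + (r_{a⁻¹})_* π_G(a) ∈ h ∧ g` for all `a ∈ H`,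
    -- i.e. its contraction with any `ξ ∈ h⁰` lies in `h`
    (hLam : ∀ (a : H) (ξ : gs), (∀ x ∈ hsub, p x ξ = 0) →
      A a (L (Astar a⁻¹ ξ)) - L ξ + W a ξ ∈ hsub) :
    -- conclusion: `Ad_a(Λξ) + p_g(Ad_a ξ) − Λ(Ad*_{a⁻¹}ξ) ∈ h` for `ξ ∈ h⁰`, `a ∈ H`
    ∀ (a : H) (ξ : gs), (∀ x ∈ hsub, p x ξ = 0) →
      A a (L ξ) + W a (Astar a ξ) - L (Astar a ξ) ∈ hsub := by
  intro a ξ hξ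
  have hmem : ∀ x ∈ hsub, p x (Astar a ξ) = 0 := by
    intro x hx
    rw [hAstar]
    exact hξ _ (hAh a⁻¹ x hx)
  have key := hLam a (Astar a ξ) hmem
  have hinv : Astar a⁻¹ (Astar a ξ) = ξ := by
    apply sub_eq_zero.mp
    apply hp2
    intro x
    rw [map_sub, hAstar, hAstar, inv_inv]
    have hx : (A a⁻¹) ((A a) x) = x := by
      rw [map_inv]; exact (A a).symm_apply_apply x
    rw [hx, sub_self]
  rw [hinv] at key
  have : A a (L ξ) + W a (Astar a ξ) - L (Astar a ξ)
      = A a (L ξ) - L (Astar a ξ) + W a (Astar a ξ) := by abel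
  rw [this]
  exact key
end
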